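/- arXiv:1712.07222 — 6 statements merged into one kernel-verified Lean document; each statement's English description precedes it below -/
import Mathlib

section
/- Let y be obtained from a binary string x by deleting one symbol equal to 0 and one symbol equal to 1. Then it is impossible that both N_{0000}(y) − N_{0000}(x) mod 7 ∈ {1,2,3} and N_{1111}(x) − N_{1111}(y) mod 7 ∈ {1,2,3} hold. -/
/-- Delete from `x` the symbols at the positions in `S`. -/
def deleteIdxs (x : List Bool) (S : Finset ℕ) : List Bool :=
  ((List.range x.length).filter (fun i => decide (i ∉ S))).map (fun i => x.getD i false)

/-- `w` occurs in `x` at position `i`. -/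
def occursAt (w x : List Bool) (i : ℕ) : Prop := w <+: x.drop i

/-- The number of (possibly overlapping) occurrences of `w` in `x`. -/
def Nw (w x : List Bool) : ℕ :=
  ((Finset.range x.length).filter (fun i => w <+: x.drop i)).card

/-- The position in the shortened string of the junction produced by deleting position `k`. -/
def junction (S : Finset ℕ) (k : ℕ) : ℕ :=
  ((Finset.range k).filter (fun m => m ∉ S)).card

/-- `w` is preserved from `x` to `y`: some set `S` of deleted positions realizing `y`
destroys no occurrence of `w` in `x` and no occurrence of `w` in `y` spans a junction. -/
def Preserved (w x y : List Bool) : Prop :=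
  ∃ S : Finset ℕ,
    (∀ k ∈ S, k < x.length) ∧
    S.card + y.length = x.length ∧
    deleteIdxs x S = y ∧
    (∀ i, occursAt w x i → ∀ k ∈ S, ¬ (i ≤ k ∧ k < i + w.length)) ∧
    (∀ j, occursAt w y j → ∀ k ∈ S, ¬ (j < junction S k ∧ junction S k < j + w.length))

/-- `x` has a (maximal) run of length `ℓ` starting at position `i`. -/
def runAt (x : List Bool) (i ℓ : ℕ) : Prop :=
  0 < ℓ ∧ i + ℓ ≤ x.length ∧
  (∀ j, i ≤ j → j < i + ℓ → x.getD j false = x.getD i false) ∧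
  (i = 0 ∨ x.getD (i - 1) false ≠ x.getD i false) ∧
  (i + ℓ = x.length ∨ x.getD (i + ℓ) false ≠ x.getD i false)

/-- position `k` of `x` lies in a run of length `ℓ`. -/
def inRun (x : List Bool) (k ℓ : ℕ) : Prop := ∃ i, runAt x i ℓ ∧ i ≤ k ∧ k < i + ℓ

def w0000 : List Bool := [false, false, false, false]
def w1111 : List Bool := [true, true, true, true]
def w11011 : List Bool := [true, true, false, true, true]
def w110011 : List Bool := [true, true, false, false, true, true]

/-- The set of strings obtainable from `x` by deleting two symbols. -/
def D2 (x : List Bool) : Set (List Bool) :=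
  { y | ∃ i j : ℕ, i < j ∧ j < x.length ∧ y = deleteIdxs x ({i, j} : Finset ℕ) }

/-- run-length representation of the runs of ones, in order. -/
def tau1 (x : List Bool) : List ℕ :=
  ((x.splitBy (· == ·)).filter (fun r => r.headD false)).map List.length

/-- the subsequence of `tau1` of entries at least 2. -/
def tauGe2 (x : List Bool) : List ℕ := (tau1 x).filter (fun ℓ => decide (2 ≤ ℓ))

/-- sum of the odd-indexed entries. -/
def oddIdxSum (l : List ℕ) : ℕ :=
  ((Finset.range l.length).filter (fun i => i % 2 = 1)).sum (fun i => l.getD i 0)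


/-- delete one index -/
def del1 (x : List Bool) (b : ℕ) : List Bool := x.take b ++ x.drop (b+1)

lemma length_del1 {x : List Bool} {b : ℕ} (h : b < x.length) :
    (del1 x b).length = x.length - 1 := by
  simp [del1]; omega

lemma getD_del1 {x : List Bool} {b : ℕ} (h : b < x.length) (m : ℕ) :
    (del1 x b).getD m false = if m < b then x.getD m false else x.getD (m+1) false := by
  rw [del1, List.getD_eq_getElem?_getD, List.getD_eq_getElem?_getD, List.getD_eq_getElem?_getD]
  by_cases hm : m < b
  · rw [List.getElem?_append_left (by simp; omega), List.getElem?_take]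
    simp [hm]
  · rw [List.getElem?_append_right (by simp; omega)]
    rw [List.getElem?_drop]
    simp only [if_neg hm]
    congr 2
    simp
    omega

/-- the occurrence set -/
def occ (c : Bool) (x : List Bool) : Finset ℕ :=
  (Finset.range x.length).filter (fun i => [c,c,c,c] <+: x.drop i)

def cond4 (c : Bool) (x : List Bool) (i : ℕ) : Prop :=
  i + 4 ≤ x.length ∧ ∀ t, t < 4 → x.getD (i+t) false = c

lemma mem_occ_iff {c : Bool} {x : List Bool} {i : ℕ} : i ∈ occ c x ↔ cond4 c x i := by
  rw [occ, Finset.mem_filter, Finset.mem_range, cond4]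
  constructor
  · rintro ⟨hi, hp⟩
    have hlen : 4 ≤ (x.drop i).length := by simpa using hp.length_le
    simp only [List.length_drop] at hlen
    refine ⟨by omega, fun t ht => ?_⟩
    have h1 : t < ([c,c,c,c] : List Bool).length := by simpa using ht
    have h2 := hp.getElem h1
    have h3 : (x.drop i)[t]'(by simp; omega) = x[i+t]'(by omega) := List.getElem_drop
    rw [h3] at h2
    rw [List.getD_eq_getElem x false (by omega), ← h2]
    interval_cases t <;> rfl
  · rintro ⟨hb, hv⟩
    refine ⟨by omega, ?_⟩
    have : (x.drop i).take 4 = [c,c,c,c] := by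
      apply List.ext_getElem (by simp; omega)
      intro t h1 h2
      have ht : t < 4 := by simpa using h2
      have : ((x.drop i).take 4)[t] = x[i+t]'(by omega) := by
        rw [List.getElem_take, List.getElem_drop]
      rw [this]
      rw [← List.getD_eq_getElem x false (by omega), hv t ht]
      interval_cases t <;> rfl
    rw [← this]
    exact List.take_prefix _ _

lemma map_getD_range' (x : List Bool) (a k : ℕ) (h : a + k ≤ x.length) :
    (List.range' a k).map (fun m => x.getD m false) = (x.drop a).take k := by
  induction k generalizing a with
  | zero => simp
  | succ k ih =>
    rw [List.range'_succ, List.map_cons, ih (a+1) (by omega)]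
    rw [List.drop_eq_getElem_cons (show a < x.length by omega)]
    rw [List.take_succ_cons, List.getD_eq_getElem x false (by omega)]

lemma deleteIdxs_pair (x : List Bool) (i j : ℕ) (hij : i < j) (hj : j < x.length) :
    deleteIdxs x ({i, j} : Finset ℕ) = del1 (del1 x j) i := by
  have e1 : List.range' 0 i ++ List.range' i (x.length - i) = List.range' 0 x.length := by
    have h := List.range'_append (s := 0) (m := i) (n := x.length - i) (step := 1)
    simp only [one_mul, zero_add] at h
    rw [show i + (x.length - i) = x.length by omega] at h; exact h
  have e2 : List.range' i 1 ++ List.range' (i+1) (x.length - i - 1)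
      = List.range' i (x.length - i) := by
    have h := List.range'_append (s := i) (m := 1) (n := x.length - i - 1) (step := 1)
    simp only [one_mul, mul_one] at h
    rw [show 1 + (x.length - i - 1) = x.length - i by omega] at h; exact h
  have e3 : List.range' (i+1) (j-i-1) ++ List.range' j (x.length - j)
      = List.range' (i+1) (x.length - i - 1) := by
    have h := List.range'_append (s := i+1) (m := j-i-1) (n := x.length - j) (step := 1)
    simp only [one_mul] at h
    rw [show i+1+(j-i-1) = j by omega, show j-i-1+(x.length-j) = x.length-i-1 by omega] at h
    exact h
  have e4 : List.range' j 1 ++ List.range' (j+1) (x.length - j - 1)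
      = List.range' j (x.length - j) := by
    have h := List.range'_append (s := j) (m := 1) (n := x.length - j - 1) (step := 1)
    simp only [one_mul, mul_one] at h
    rw [show 1 + (x.length - j - 1) = x.length - j by omega] at h; exact h
  have hsplit : List.range x.length =
      List.range' 0 i ++ (List.range' i 1 ++ (List.range' (i+1) (j-i-1)
        ++ (List.range' j 1 ++ List.range' (j+1) (x.length-j-1)))) := by
    rw [List.range_eq_range', ← e1, ← e2, ← e3, ← e4]
  rw [deleteIdxs, hsplit]
  simp only [List.filter_append]
  have hp : ∀ m : ℕ, m ≠ i → m ≠ j → (decide (m ∉ ({i, j} : Finset ℕ)) = true) := by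
    intro m h1 h2; simp [h1, h2]
  have f1 : List.filter (fun m => decide (m ∉ ({i, j} : Finset ℕ))) (List.range' 0 i)
      = List.range' 0 i := by
    rw [List.filter_eq_self]
    intro a ha; rw [List.mem_range'_1] at ha; exact hp a (by omega) (by omega)
  have f2 : List.filter (fun m => decide (m ∉ ({i, j} : Finset ℕ))) (List.range' i 1) = [] := by
    simp
  have f3 : List.filter (fun m => decide (m ∉ ({i, j} : Finset ℕ))) (List.range' (i+1) (j-i-1))
      = List.range' (i+1) (j-i-1) := by
    rw [List.filter_eq_self]
    intro a ha; rw [List.mem_range'_1] at ha; exact hp a (by omega) (by omega)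
  have f4 : List.filter (fun m => decide (m ∉ ({i, j} : Finset ℕ))) (List.range' j 1) = [] := by
    simp
  have f5 : List.filter (fun m => decide (m ∉ ({i, j} : Finset ℕ)))
      (List.range' (j+1) (x.length-j-1)) = List.range' (j+1) (x.length-j-1) := by
    rw [List.filter_eq_self]
    intro a ha; rw [List.mem_range'_1] at ha; exact hp a (by omega) (by omega)
  rw [f1, f2, f3, f4, f5, List.nil_append, List.nil_append]
  simp only [List.map_append]
  rw [map_getD_range' x 0 i (by omega), map_getD_range' x (i+1) (j-i-1) (by omega),
    map_getD_range' x (j+1) (x.length-j-1) (by omega)]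
  rw [List.drop_zero]
  -- RHS
  have rhs : del1 (del1 x j) i
      = x.take i ++ ((x.drop (i+1)).take (j-i-1) ++ x.drop (j+1)) := by
    rw [del1, del1]
    rw [List.take_append_of_le_length (by simp; omega)]
    rw [List.drop_append_of_le_length (by simp; omega)]
    rw [List.take_take, min_eq_left (by omega)]
    rw [List.drop_take]
    rw [show j - (i+1) = j - i - 1 by omega]
  rw [rhs]
  congr 1
  congr 1
  rw [List.take_of_length_le (by simp; omega)]

variable {u : List Bool} {b : ℕ} {c : Bool}

/-- deleting a symbol equal to `c` cannot increase the number of `cccc`s. -/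
lemma occ_del1_le (h : b < u.length) (hv : u.getD b false = c) :
    (occ c (del1 u b)).card ≤ (occ c u).card := by
  apply Finset.card_le_card_of_injOn (fun j => if j < b then j else j + 1)
  · intro j hj
    obtain ⟨hb4, hvj⟩ := mem_occ_iff.mp hj
    rw [length_del1 h] at hb4
    rw [Finset.mem_coe, mem_occ_iff]
    by_cases hjb : j < b
    · simp only [if_pos hjb]
      refine ⟨by omega, fun t ht => ?_⟩
      rcases Nat.lt_trichotomy (j + t) b with h1 | h1 | h1
      · have := hvj t ht; rwa [getD_del1 h, if_pos h1] at this
      · rw [h1]; exact hv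
      · have := hvj (t-1) (by omega)
        rw [getD_del1 h, if_neg (by omega), show j + (t-1) + 1 = j + t by omega] at this
        exact this
    · simp only [if_neg hjb]
      refine ⟨by omega, fun t ht => ?_⟩
      have := hvj t ht
      rw [getD_del1 h, if_neg (by omega), show j + t + 1 = j + 1 + t by omega] at this
      exact this
  · intro a _ a' _ hf
    simp only at hf; split_ifs at hf <;> omega

/-- if no occurrence in `u` spans the deleted position, the count cannot decrease. -/
lemma le_occ_del1_of_no_span (h : b < u.length)
    (hsp : ∀ i ∈ occ c u, ¬(i ≤ b ∧ b < i + 4)) :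
    (occ c u).card ≤ (occ c (del1 u b)).card := by
  apply Finset.card_le_card_of_injOn (fun i => if i < b then i else i - 1)
  · intro i hi
    have hnsp := hsp i hi
    obtain ⟨hb4, hvi⟩ := mem_occ_iff.mp hi
    rw [Finset.mem_coe, mem_occ_iff]
    by_cases hib : i < b
    · have hfb : i + 4 ≤ b := by omega
      simp only [if_pos hib]
      refine ⟨by rw [length_del1 h]; omega, fun t ht => ?_⟩
      rw [getD_del1 h, if_pos (by omega)]
      exact hvi t ht
    · have hbi : b < i := by omega
      simp only [if_neg hib]
      refine ⟨by rw [length_del1 h]; omega, fun t ht => ?_⟩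
      rw [getD_del1 h, if_neg (by omega), show i - 1 + t + 1 = i + t by omega]
      exact hvi t ht
  · intro a ha a' ha' hf
    have d1 := hsp a (Finset.mem_coe.mp ha)
    have d2 := hsp a' (Finset.mem_coe.mp ha')
    have e1 := (mem_occ_iff.mp (Finset.mem_coe.mp ha)).1
    have e2 := (mem_occ_iff.mp (Finset.mem_coe.mp ha')).1
    simp only at hf; split_ifs at hf <;> omega

/-- if no occurrence in the shortened string spans the junction, the count cannot increase. -/
lemma occ_del1_le_of_no_span (h : b < u.length)
    (hsp : ∀ j ∈ occ c (del1 u b), ¬(j < b ∧ b ≤ j + 3)) :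
    (occ c (del1 u b)).card ≤ (occ c u).card := by
  apply Finset.card_le_card_of_injOn (fun j => if j < b then j else j + 1)
  · intro j hj
    have hnsp := hsp j hj
    obtain ⟨hb4, hvj⟩ := mem_occ_iff.mp hj
    rw [length_del1 h] at hb4
    rw [Finset.mem_coe, mem_occ_iff]
    by_cases hjb : j < b
    · have hfb : j + 4 ≤ b := by omega
      simp only [if_pos hjb]
      refine ⟨by omega, fun t ht => ?_⟩
      have := hvj t ht
      rwa [getD_del1 h, if_pos (by omega)] at this
    · simp only [if_neg hjb]
      refine ⟨by omega, fun t ht => ?_⟩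
      have := hvj t ht
      rwa [getD_del1 h, if_neg (by omega), show j + t + 1 = j + 1 + t by omega] at this
  · intro a _ a' _ hf
    simp only at hf; split_ifs at hf <;> omega

/-- the count increases by at most 3. -/
lemma occ_del1_le_add_three (h : b < u.length) :
    (occ c (del1 u b)).card ≤ (occ c u).card + 3 := by
  classical
  have hsplit := Finset.card_filter_add_card_filter_not
    (s := occ c (del1 u b)) (p := fun j => j < b ∧ b ≤ j + 3)
  have h3 : ((occ c (del1 u b)).filter (fun j => j < b ∧ b ≤ j + 3)).card ≤ 3 := by
    calc ((occ c (del1 u b)).filter (fun j => j < b ∧ b ≤ j + 3)).card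
        ≤ (Finset.Ico (b-3) b).card := by
          apply Finset.card_le_card
          intro j hj
          obtain ⟨_, hj1, hj2⟩ := Finset.mem_filter.mp hj
          rw [Finset.mem_Ico]; omega
      _ ≤ 3 := by rw [Nat.card_Ico]; omega
  have h4 : ((occ c (del1 u b)).filter (fun j => ¬(j < b ∧ b ≤ j + 3))).card
      ≤ (occ c u).card := by
    apply Finset.card_le_card_of_injOn (fun j => if j < b then j else j + 1)
    · intro j hj
      obtain ⟨hjocc, hnsp⟩ := Finset.mem_filter.mp hj
      obtain ⟨hb4, hvj⟩ := mem_occ_iff.mp hjocc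
      rw [length_del1 h] at hb4
      rw [Finset.mem_coe, mem_occ_iff]
      by_cases hjb : j < b
      · have hfb : j + 4 ≤ b := by omega
        simp only [if_pos hjb]
        refine ⟨by omega, fun t ht => ?_⟩
        have := hvj t ht
        rwa [getD_del1 h, if_pos (by omega)] at this
      · simp only [if_neg hjb]
        refine ⟨by omega, fun t ht => ?_⟩
        have := hvj t ht
        rwa [getD_del1 h, if_neg (by omega), show j + t + 1 = j + 1 + t by omega] at this
    · intro a _ a' _ hf
      simp only at hf; split_ifs at hf <;> omega
  omega

/-- deleting a symbol equal to `c` decreases the count by at most 1. -/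
lemma le_occ_del1_add_one (h : b < u.length) (hv : u.getD b false = c) :
    (occ c u).card ≤ (occ c (del1 u b)).card + 1 := by
  classical
  set Sp := (occ c u).filter (fun i => i ≤ b ∧ b < i + 4) with hSpdef
  rcases Sp.eq_empty_or_nonempty with hemp | hne
  · have hsp : ∀ i ∈ occ c u, ¬(i ≤ b ∧ b < i + 4) := by
      intro i hi hcon
      have : i ∈ Sp := Finset.mem_filter.mpr ⟨hi, hcon⟩
      rw [hemp] at this; exact absurd this (Finset.notMem_empty i)
    exact le_trans (le_occ_del1_of_no_span h hsp) (Nat.le_succ _)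
  · set m := Sp.max' hne with hmdef
    have hm : m ∈ Sp := Finset.max'_mem _ _
    obtain ⟨hmocc, hm1, hm2⟩ := Finset.mem_filter.mp hm
    have hmc := mem_occ_iff.mp hmocc
    have hmlen : m + 4 ≤ u.length := hmc.1
    have hkey : ∀ i ∈ (occ c u).erase m, i ≤ b → b < i + 4 → i < m := by
      intro i hi h1 h2
      obtain ⟨hine, hiocc⟩ := Finset.mem_erase.mp hi
      have : i ∈ Sp := Finset.mem_filter.mpr ⟨hiocc, h1, h2⟩
      have := Finset.le_max' Sp i this
      omega
    have hcard : (occ c u).card = ((occ c u).erase m).card + 1 :=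
      (Finset.card_erase_add_one hmocc).symm
    rw [hcard]
    have key : ((occ c u).erase m).card ≤ (occ c (del1 u b)).card := by
      apply Finset.card_le_card_of_injOn (fun i => if b < i then i - 1 else i)
      · intro i hi
        obtain ⟨hine, hiocc⟩ := Finset.mem_erase.mp hi
        obtain ⟨hb4, hvi⟩ := mem_occ_iff.mp hiocc
        rw [Finset.mem_coe, mem_occ_iff]
        by_cases hbi : b < i
        · simp only [if_pos hbi]
          refine ⟨by rw [length_del1 h]; omega, fun t ht => ?_⟩
          rw [getD_del1 h, if_neg (by omega), show i - 1 + t + 1 = i + t by omega]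
          exact hvi t ht
        · simp only [if_neg hbi]
          by_cases hsp4 : i + 4 ≤ b
          · refine ⟨by rw [length_del1 h]; omega, fun t ht => ?_⟩
            rw [getD_del1 h, if_pos (by omega)]
            exact hvi t ht
          · -- spanning, i ≠ m, so i < m
            have hilt : i < m := hkey i hi (by omega) (by omega)
            refine ⟨by rw [length_del1 h]; omega, fun t ht => ?_⟩
            rw [getD_del1 h]
            by_cases h1 : i + t < b
            · rw [if_pos h1]; exact hvi t ht
            · rw [if_neg h1]
              have hp1 : m < i + t + 1 := by omega
              have hp2 : i + t + 1 ≤ m + 3 := by omega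
              have := hmc.2 (i + t + 1 - m) (by omega)
              rwa [show m + (i + t + 1 - m) = i + t + 1 by omega] at this
      · intro a ha a' ha' hf
        have ha2 := Finset.mem_coe.mp ha
        have ha2' := Finset.mem_coe.mp ha'
        have e1 := (mem_occ_iff.mp (Finset.mem_erase.mp ha2).2).1
        have e1' := (mem_occ_iff.mp (Finset.mem_erase.mp ha2').2).1
        simp only at hf
        split_ifs at hf with c1 c2 c2
        · omega
        · -- a > b, a' ≤ b : a - 1 = a'
          rcases Nat.lt_or_ge b (a' + 4) with hc | hc
          · have := hkey a' ha2' (by omega) hc; omega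
          · omega
        · rcases Nat.lt_or_ge b (a + 4) with hc | hc
          · have := hkey a ha2 (by omega) hc; omega
          · omega
        · omega
    omega

/-- the key contradiction. -/
lemma key_contradiction (h : b < u.length) (hv : u.getD b false = true)
    (h0 : (occ false u).card < (occ false (del1 u b)).card)
    (h1 : (occ true (del1 u b)).card < (occ true u).card) : False := by
  have hex0 : ∃ j ∈ occ false (del1 u b), j < b ∧ b ≤ j + 3 := by
    by_contra hcon; push_neg at hcon
    have := occ_del1_le_of_no_span (c := false) h (by
      intro j hj hc
      exact absurd hc.2 (Nat.not_le.mpr (by have := hcon j hj; omega)))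
    omega
  obtain ⟨j, hj, hj1, hj2⟩ := hex0
  obtain ⟨hjb, hjv⟩ := mem_occ_iff.mp hj
  have e1 : u.getD (b-1) false = false := by
    have := hjv (b-1-j) (by omega)
    rwa [getD_del1 h, if_pos (by omega), show j + (b-1-j) = b-1 by omega] at this
  have e2 : u.getD (b+1) false = false := by
    have := hjv (b-j) (by omega)
    rwa [getD_del1 h, if_neg (by omega), show j + (b-j) + 1 = b+1 by omega] at this
  have hex1 : ∃ i ∈ occ true u, i ≤ b ∧ b < i + 4 := by
    by_contra hcon; push_neg at hcon
    have := le_occ_del1_of_no_span (c := true) h (by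
      intro i hi hc
      exact absurd hc.2 (by have := hcon i hi; omega))
    omega
  obtain ⟨i, hi, hi1, hi2⟩ := hex1
  obtain ⟨hib, hiv⟩ := mem_occ_iff.mp hi
  by_cases hib' : i < b
  · have := hiv (b-1-i) (by omega)
    rw [show i + (b-1-i) = b-1 by omega, e1] at this
    exact absurd this (by simp)
  · have hieq : i = b := by omega
    have := hiv 1 (by omega)
    rw [hieq, e2] at this
    exact absurd this (by simp)


lemma le_occ_del1_of_ne {u : List Bool} {b : ℕ} {c : Bool} (h : b < u.length)
    (hv : u.getD b false ≠ c) :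
    (occ c u).card ≤ (occ c (del1 u b)).card := by
  apply le_occ_del1_of_no_span h
  intro i hi hc
  obtain ⟨_, hvi⟩ := mem_occ_iff.mp hi
  have := hvi (b - i) (by omega)
  rw [show i + (b - i) = b by omega] at this
  exact hv this

/-- When a `0` and a `1` are deleted, it is impossible that both
`(N₀₀₀₀(y) - N₀₀₀₀(x)) mod 7 ∈ {1,2,3}` and `(N₁₁₁₁(x) - N₁₁₁₁(y)) mod 7 ∈ {1,2,3}`. -/
theorem impossible_mod_combination (x y : List Bool) (k₀ k₁ : ℕ) (hne : k₀ ≠ k₁)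
    (h0 : k₀ < x.length) (h1 : k₁ < x.length)
    (hv0 : x.getD k₀ false = false) (hv1 : x.getD k₁ false = true)
    (hy : y = deleteIdxs x ({k₀, k₁} : Finset ℕ)) :
    ¬ ((((Nw w0000 y : ℤ) - (Nw w0000 x : ℤ)) % 7 ∈ ({1, 2, 3} : Set ℤ)) ∧
       (((Nw w1111 x : ℤ) - (Nw w1111 y : ℤ)) % 7 ∈ ({1, 2, 3} : Set ℤ))) := by
  have hNy0 : Nw w0000 y = (occ false y).card := rfl
  have hNx0 : Nw w0000 x = (occ false x).card := rfl
  have hNy1 : Nw w1111 y = (occ true y).card := rfl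
  have hNx1 : Nw w1111 x = (occ true x).card := rfl
  rintro ⟨hA, hB⟩
  simp only [Set.mem_insert_iff, Set.mem_singleton_iff] at hA hB
  rw [hNy0, hNx0] at hA
  rw [hNy1, hNx1] at hB
  rcases Nat.lt_or_ge k₀ k₁ with hk | hk
  · -- k₀ < k₁ : delete the 1 first
    set z := del1 x k₁ with hz
    have hyz : y = del1 z k₀ := by rw [hy, deleteIdxs_pair x k₀ k₁ hk h1]
    have hk0z : k₀ < z.length := by rw [hz, length_del1 h1]; omega
    have hz0 : z.getD k₀ false = false := by
      rw [hz, getD_del1 h1, if_pos hk]; exact hv0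
    have a1 : (occ false z).card ≤ (occ false x).card + 3 := occ_del1_le_add_three h1
    have a2 : (occ false x).card ≤ (occ false z).card :=
      le_occ_del1_of_ne h1 (by rw [hv1]; simp)
    have a3 : (occ false y).card ≤ (occ false z).card := by
      rw [hyz]; exact occ_del1_le hk0z hz0
    have a4 : (occ false z).card ≤ (occ false y).card + 1 := by
      rw [hyz]; exact le_occ_del1_add_one hk0z hz0
    have b1 : (occ true z).card ≤ (occ true x).card := occ_del1_le h1 hv1
    have b2 : (occ true x).card ≤ (occ true z).card + 1 := le_occ_del1_add_one h1 hv1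
    have b3 : (occ true z).card ≤ (occ true y).card := by
      rw [hyz]; exact le_occ_del1_of_ne hk0z (by rw [hz0]; simp)
    have b4 : (occ true y).card ≤ (occ true z).card + 3 := by
      rw [hyz]; exact occ_del1_le_add_three hk0z
    have hfin : (occ false x).card < (occ false z).card ∧
        (occ true z).card < (occ true x).card := by omega
    exact key_contradiction h1 hv1 hfin.1 hfin.2
  · -- k₁ < k₀ : delete the 0 first
    have hk' : k₁ < k₀ := by omega
    set z := del1 x k₀ with hz
    have hyz : y = del1 z k₁ := by
      rw [hy, Finset.pair_comm, deleteIdxs_pair x k₁ k₀ hk' h0]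
    have hk1z : k₁ < z.length := by rw [hz, length_del1 h0]; omega
    have hz1 : z.getD k₁ false = true := by
      rw [hz, getD_del1 h0, if_pos hk']; exact hv1
    have a1 : (occ false z).card ≤ (occ false x).card := occ_del1_le h0 hv0
    have a2 : (occ false x).card ≤ (occ false z).card + 1 := le_occ_del1_add_one h0 hv0
    have a3 : (occ false z).card ≤ (occ false y).card := by
      rw [hyz]; exact le_occ_del1_of_ne hk1z (by rw [hz1]; simp)
    have a4 : (occ false y).card ≤ (occ false z).card + 3 := by
      rw [hyz]; exact occ_del1_le_add_three hk1z
    have b1 : (occ true x).card ≤ (occ true z).card :=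
      le_occ_del1_of_ne h0 (by rw [hv0]; simp)
    have b2 : (occ true z).card ≤ (occ true x).card + 3 := occ_del1_le_add_three h0
    have b3 : (occ true y).card ≤ (occ true z).card := by
      rw [hyz]; exact occ_del1_le hk1z hz1
    have b4 : (occ true z).card ≤ (occ true y).card + 1 := by
      rw [hyz]; exact le_occ_del1_add_one hk1z hz1
    have hfin : (occ false z).card < (occ false (del1 z k₁)).card ∧
        (occ true (del1 z k₁)).card < (occ true z).card := by
      rw [← hyz]; omega
    exact key_contradiction hk1z hz1 hfin.1 hfin.2
end

section
/- Let y be obtained from a binary string x by deleting one symbol equal to 0 and one symbol equal to 1. If N_{0000}(y) − N_{0000}(x) mod 7 ∈ {1,2,3} and N_{1111}(x) ≡ N_{1111}(y) (mod 7), then the deleted 1 lies in a run of x of length 1 and the string 1111 is preserved from x to y. -/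
namespace CA

def h2 (d₁ d₂ m : ℕ) : ℕ := if m < d₁ then m else if m + 1 < d₂ then m + 1 else m + 2
def g2 (d₁ d₂ s : ℕ) : ℕ := s - (if d₁ < s then 1 else 0) - (if d₂ < s then 1 else 0)

lemma filter_range_eq (d₁ d₂ : ℕ) (h : d₁ < d₂) (n : ℕ) :
    (List.range n).filter (fun i => decide (i ∉ ({d₁, d₂} : Finset ℕ)))
      = (List.range (g2 d₁ d₂ n)).map (h2 d₁ d₂) := by
  induction n with
  | zero => simp [g2]
  | succ n ih =>
    rw [List.range_succ, List.filter_append, ih]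
    by_cases hn : n ∈ ({d₁, d₂} : Finset ℕ)
    · have hg : g2 d₁ d₂ (n+1) = g2 d₁ d₂ n := by
        simp only [Finset.mem_insert, Finset.mem_singleton] at hn
        unfold g2; rcases hn with h1 | h1 <;> split_ifs <;> omega
      rw [hg]
      simp only [Finset.mem_insert, Finset.mem_singleton] at hn
      have : (decide (n ∉ ({d₁, d₂} : Finset ℕ))) = false := by
        simp [Finset.mem_insert, Finset.mem_singleton]; omega
      simp [this]
      tauto
    · have hn' : n ≠ d₁ ∧ n ≠ d₂ := by
        simp only [Finset.mem_insert, Finset.mem_singleton, not_or] at hn; exact hn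
      have hg : g2 d₁ d₂ (n+1) = g2 d₁ d₂ n + 1 := by
        unfold g2; split_ifs <;> omega
      have hh : h2 d₁ d₂ (g2 d₁ d₂ n) = n := by
        unfold h2 g2; split_ifs <;> omega
      rw [hg, List.range_succ, List.map_append]
      have : (decide (n ∉ ({d₁, d₂} : Finset ℕ))) = true := by
        simp [Finset.mem_insert, Finset.mem_singleton]; tauto
      simp [this, hh]
      tauto

lemma deleteIdxs_eq (x : List Bool) (d₁ d₂ : ℕ) (h : d₁ < d₂) (hn : d₂ < x.length) :
    deleteIdxs x {d₁, d₂}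
      = (List.range (x.length - 2)).map (fun j => x.getD (h2 d₁ d₂ j) false) := by
  unfold deleteIdxs
  rw [filter_range_eq d₁ d₂ h, List.map_map]
  have : g2 d₁ d₂ x.length = x.length - 2 := by unfold g2; split_ifs <;> omega
  rw [this]
  rfl

lemma deleteIdxs_length (x : List Bool) (d₁ d₂ : ℕ) (h : d₁ < d₂) (hn : d₂ < x.length) :
    (deleteIdxs x {d₁, d₂}).length = x.length - 2 := by
  rw [deleteIdxs_eq x d₁ d₂ h hn]; simp

lemma deleteIdxs_getD (x : List Bool) (d₁ d₂ : ℕ) (h : d₁ < d₂) (hn : d₂ < x.length)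
    (j : ℕ) (hj : j < x.length - 2) :
    (deleteIdxs x {d₁, d₂}).getD j false = x.getD (h2 d₁ d₂ j) false := by
  rw [deleteIdxs_eq x d₁ d₂ h hn]
  rw [List.getD_eq_getElem?_getD, List.getElem?_map, List.getElem?_range hj]
  rfl

lemma junction_eq (d₁ d₂ : ℕ) (h : d₁ < d₂) (k : ℕ) :
    junction {d₁, d₂} k = g2 d₁ d₂ k := by
  unfold junction
  have : ((Finset.range k).filter (fun m => m ∉ ({d₁, d₂} : Finset ℕ)))
      = ((List.range k).filter (fun i => decide (i ∉ ({d₁, d₂} : Finset ℕ)))).toFinset := by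
    ext m
    simp [List.mem_filter]
  rw [this, filter_range_eq d₁ d₂ h]
  rw [List.toFinset_card_of_nodup]
  · simp
  · refine List.Nodup.map ?_ List.nodup_range
    intro a b hab
    unfold h2 at hab; split_ifs at hab <;> omega


def POcc (c : Bool) (l : List Bool) (j : ℕ) : Prop :=
  j + 4 ≤ l.length ∧ ∀ t, t < 4 → l.getD (j + t) false = c

instance (c : Bool) (l : List Bool) : DecidablePred (POcc c l) := by
  intro j; unfold POcc; infer_instance

lemma replicate_prefix_iff (c : Bool) (L : List Bool) :
    List.replicate 4 c <+: L ↔ 4 ≤ L.length ∧ ∀ t, t < 4 → L.getD t false = c := by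
  constructor
  · rintro ⟨r, hr⟩
    subst hr
    constructor
    · simp
    · intro t ht
      rw [List.getD_eq_getElem?_getD, List.getElem?_append_left (by simp [ht])]
      simp only [List.getElem?_replicate, ht, if_pos]
      rfl
  · rintro ⟨hlen, hc⟩
    have h1 : List.replicate 4 c = L.take 4 := by
      apply List.ext_getElem
      · simp [hlen]
      · intro i h₁ h₂
        have hi : i < 4 := by simpa using h₁
        have h3 := hc i hi
        rw [List.getD_eq_getElem?_getD, List.getElem?_eq_getElem (show i < L.length by omega)] at h3
        simp only [Option.getD_some] at h3
        simp [List.getElem_take, h3]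
        interval_cases i <;> rfl
    rw [h1]; exact List.take_prefix _ _

lemma occursAt_iff (c : Bool) (l : List Bool) (j : ℕ) :
    occursAt (List.replicate 4 c) l j ↔ POcc c l j := by
  unfold occursAt POcc
  rw [replicate_prefix_iff]
  constructor
  · rintro ⟨hl, hc⟩
    refine ⟨by simp at hl; omega, fun t ht => ?_⟩
    have := hc t ht
    rwa [List.getD_eq_getElem?_getD, List.getElem?_drop, ← List.getD_eq_getElem?_getD] at this
  · rintro ⟨hl, hc⟩
    refine ⟨by simp; omega, fun t ht => ?_⟩
    rw [List.getD_eq_getElem?_getD, List.getElem?_drop, ← List.getD_eq_getElem?_getD]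
    exact hc t ht

lemma Nw_eq (c : Bool) (l : List Bool) :
    Nw (List.replicate 4 c) l
      = ((Finset.range l.length).filter (fun j => POcc c l j)).card := by
  unfold Nw
  congr 1
  apply Finset.filter_congr
  intro j _
  rw [← occursAt_iff]
  rfl


def Span (j u : ℕ) : Prop := j < u ∧ u < j + 4

instance (j u : ℕ) : Decidable (Span j u) := by unfold Span; infer_instance

section Core

variable {x : List Bool} {d₁ d₂ : ℕ}

lemma POcc_y_iff (h : d₁ < d₂) (hn : d₂ < x.length) (c : Bool) (j : ℕ) :
    POcc c (deleteIdxs x {d₁, d₂}) j ↔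
      (j + 4 ≤ x.length - 2 ∧ ∀ t, t < 4 → x.getD (h2 d₁ d₂ (j + t)) false = c) := by
  unfold POcc
  rw [deleteIdxs_length x d₁ d₂ h hn]
  constructor <;> rintro ⟨hl, hc⟩ <;> refine ⟨hl, fun t ht => ?_⟩
  · rw [← deleteIdxs_getD x d₁ d₂ h hn (j+t) (by omega)]; exact hc t ht
  · rw [deleteIdxs_getD x d₁ d₂ h hn (j+t) (by omega)]; exact hc t ht

lemma map_noSpan (h : d₁ < d₂) (hn : d₂ < x.length) {c : Bool} {j : ℕ}
    (hl : j + 4 ≤ x.length - 2) (hc : ∀ t, t < 4 → x.getD (h2 d₁ d₂ (j + t)) false = c)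
    (hs1 : ¬ Span j d₁) (hs2 : ¬ Span j (d₂ - 1)) : POcc c x (h2 d₁ d₂ j) := by
  unfold Span at hs1 hs2
  constructor
  · unfold h2; split_ifs <;> omega
  · intro t ht
    have key : h2 d₁ d₂ (j + t) = h2 d₁ d₂ j + t := by
      unfold h2; split_ifs <;> omega
    rw [← key]; exact hc t ht

lemma map_span1 (h : d₁ < d₂) (hn : d₂ < x.length) {c : Bool} {j : ℕ}
    (hv : x.getD d₁ false = c)
    (hl : j + 4 ≤ x.length - 2) (hc : ∀ t, t < 4 → x.getD (h2 d₁ d₂ (j + t)) false = c)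
    (hs1 : Span j d₁) (hs2 : ¬ Span j (d₂ - 1)) : POcc c x (h2 d₁ d₂ j) := by
  unfold Span at hs1 hs2
  have hj : h2 d₁ d₂ j = j := by unfold h2; split_ifs <;> omega
  rw [hj]
  refine ⟨by omega, fun t ht => ?_⟩
  rcases lt_trichotomy (j + t) d₁ with hlt | heq | hgt
  · have key : h2 d₁ d₂ (j + t) = j + t := by unfold h2; split_ifs <;> omega
    have := hc t ht; rwa [key] at this
  · rw [heq]; exact hv
  · have key : h2 d₁ d₂ (j + (t - 1)) = j + t := by unfold h2; split_ifs <;> omega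
    have := hc (t - 1) (by omega); rwa [key] at this

lemma map_span2 (h : d₁ < d₂) (hn : d₂ < x.length) {c : Bool} {j : ℕ}
    (hv : x.getD d₂ false = c)
    (hl : j + 4 ≤ x.length - 2) (hc : ∀ t, t < 4 → x.getD (h2 d₁ d₂ (j + t)) false = c)
    (hs1 : Span j (d₂ - 1)) (hs2 : ¬ Span j d₁) : POcc c x (h2 d₁ d₂ j) := by
  unfold Span at hs1 hs2
  have hd₁ : d₁ ≤ j := by omega
  have hj : h2 d₁ d₂ j = j + 1 := by unfold h2; split_ifs <;> omega
  rw [hj]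
  refine ⟨by omega, fun t ht => ?_⟩
  rcases lt_trichotomy (j + 1 + t) d₂ with hlt | heq | hgt
  · have key : h2 d₁ d₂ (j + t) = j + 1 + t := by unfold h2; split_ifs <;> omega
    have := hc t ht; rwa [key] at this
  · rw [heq]; exact hv
  · have key : h2 d₁ d₂ (j + (t - 1)) = j + 1 + t := by unfold h2; split_ifs <;> omega
    have := hc (t - 1) (by omega); rwa [key] at this

lemma map_back (h : d₁ < d₂) (hn : d₂ < x.length) {c : Bool} {s : ℕ}
    (havoid : ∀ t, t < 4 → s + t ≠ d₁ ∧ s + t ≠ d₂)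
    (hs : POcc c x s) :
    (g2 d₁ d₂ s + 4 ≤ x.length - 2 ∧
      ∀ t, t < 4 → x.getD (h2 d₁ d₂ (g2 d₁ d₂ s + t)) false = c)
      ∧ ¬ Span (g2 d₁ d₂ s) d₁ ∧ ¬ Span (g2 d₁ d₂ s) (d₂ - 1) := by
  obtain ⟨hl, hc⟩ := hs
  have a0 := havoid 0 (by norm_num)
  have a1 := havoid 1 (by norm_num)
  have a2 := havoid 2 (by norm_num)
  have a3 := havoid 3 (by norm_num)
  refine ⟨⟨?_, fun t ht => ?_⟩, ?_, ?_⟩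
  · unfold g2; split_ifs <;> omega
  · have key : h2 d₁ d₂ (g2 d₁ d₂ s + t) = s + t := by
      unfold h2 g2; split_ifs <;> omega
    rw [key]; exact hc t ht
  · unfold Span g2; split_ifs <;> omega
  · unfold Span g2; split_ifs <;> omega

lemma h2_injOn (h : d₁ < d₂) {a b : ℕ} (hab : h2 d₁ d₂ a = h2 d₁ d₂ b) : a = b := by
  unfold h2 at hab; split_ifs at hab <;> omega

lemma count_upper (h : d₁ < d₂) (hn : d₂ < x.length) (c : Bool) (u : ℕ)
    (hu : (x.getD d₁ false = c ∧ u = d₂ - 1) ∨ (x.getD d₂ false = c ∧ u = d₁)) :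
    Nw (List.replicate 4 c) (deleteIdxs x {d₁, d₂}) ≤ Nw (List.replicate 4 c) x +
      ((Finset.range (x.length - 2)).filter
        (fun j => POcc c (deleteIdxs x {d₁, d₂}) j ∧ Span j u)).card := by
  classical
  rw [Nw_eq, Nw_eq, deleteIdxs_length x d₁ d₂ h hn]
  set B := (Finset.range (x.length - 2)).filter (fun j => POcc c (deleteIdxs x {d₁, d₂}) j)
    with hB
  set A := (Finset.range x.length).filter (fun j => POcc c x j) with hA
  have hsplit : (B.filter (fun j => Span j u)).card + (B.filter (fun j => ¬ Span j u)).card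
      = B.card := Finset.card_filter_add_card_filter_not _
  have hsub : (B.filter (fun j => ¬ Span j u)).card ≤ A.card := by
    apply Finset.card_le_card_of_injOn (h2 d₁ d₂)
    · intro j hj
      simp only [hB, Finset.mem_coe, Finset.mem_filter, Finset.mem_range] at hj
      obtain ⟨⟨hjr, hP⟩, hns⟩ := hj
      rw [POcc_y_iff h hn] at hP
      obtain ⟨hl, hc⟩ := hP
      have hPx : POcc c x (h2 d₁ d₂ j) := by
        rcases hu with ⟨hv, rfl⟩ | ⟨hv, rfl⟩
        · by_cases hsp : Span j d₁
          · exact map_span1 h hn hv hl hc hsp hns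
          · exact map_noSpan h hn hl hc hsp hns
        · by_cases hsp : Span j (d₂ - 1)
          · exact map_span2 h hn hv hl hc hsp hns
          · exact map_noSpan h hn hl hc hns hsp
      simp only [hA, Finset.mem_coe, Finset.mem_filter, Finset.mem_range]
      exact ⟨by have := hPx.1; omega, hPx⟩
    · intro a _ b _ hab
      exact h2_injOn h hab
  have hfil : (B.filter (fun j => Span j u))
      = (Finset.range (x.length - 2)).filter
        (fun j => POcc c (deleteIdxs x {d₁, d₂}) j ∧ Span j u) := by
    rw [hB, Finset.filter_filter]
  rw [hfil] at hsplit
  omega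

lemma span_card_le (m u : ℕ) (p : ℕ → Prop) [DecidablePred p] :
    ((Finset.range m).filter (fun j => p j ∧ Span j u)).card ≤ 3 := by
  classical
  have hsub : ((Finset.range m).filter (fun j => p j ∧ Span j u)) ⊆ Finset.Ico (u - 3) u := by
    intro j hj
    simp only [Finset.mem_filter, Finset.mem_range] at hj
    obtain ⟨_, _, hs⟩ := hj
    unfold Span at hs
    simp only [Finset.mem_Ico]
    omega
  calc ((Finset.range m).filter (fun j => p j ∧ Span j u)).card
      ≤ (Finset.Ico (u - 3) u).card := Finset.card_le_card hsub
    _ ≤ 3 := by rw [Nat.card_Ico]; omega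

lemma count_lower (h : d₁ < d₂) (hn : d₂ < x.length) (c : Bool) (e f : ℕ)
    (hef : (e = d₁ ∧ f = d₂) ∨ (e = d₂ ∧ f = d₁))
    (hve : x.getD e false = c) (hvf : x.getD f false ≠ c) :
    Nw (List.replicate 4 c) x ≤ Nw (List.replicate 4 c) (deleteIdxs x {d₁, d₂}) + 3 := by
  classical
  rw [Nw_eq, Nw_eq, deleteIdxs_length x d₁ d₂ h hn]
  set B := (Finset.range (x.length - 2)).filter
    (fun j => POcc c (deleteIdxs x {d₁, d₂}) j) with hB
  set A := (Finset.range x.length).filter (fun j => POcc c x j) with hA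
  set A1 := A.filter (fun s => ¬ (s ≤ e ∧ e < s + 4)) with hA1
  set A2 := A.filter (fun s => s ≤ e ∧ e < s + 4) with hA2
  have hsplit : A2.card + A1.card = A.card := Finset.card_filter_add_card_filter_not _
  -- avoidance for elements of A1
  have havoidA1 : ∀ s ∈ A1, (∀ t, t < 4 → s + t ≠ d₁ ∧ s + t ≠ d₂) ∧ POcc c x s := by
    intro s hs
    simp only [hA1, hA, Finset.mem_filter, Finset.mem_range] at hs
    obtain ⟨⟨hsr, hP⟩, hnw⟩ := hs
    refine ⟨fun t ht => ?_, hP⟩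
    have hval := hP.2 t ht
    have hne_e : s + t ≠ e := by intro hh; omega
    have hne_f : s + t ≠ f := by intro hh; rw [hh] at hval; exact hvf hval
    rcases hef with ⟨rfl, rfl⟩ | ⟨rfl, rfl⟩
    · exact ⟨hne_e, hne_f⟩
    · exact ⟨hne_f, hne_e⟩
  -- the image of A1 under g2 sits inside B and has the no-span property
  set C := A1.image (g2 d₁ d₂) with hC
  have hCcard : C.card = A1.card := by
    apply Finset.card_image_of_injOn
    intro a ha b hb hab
    obtain ⟨hav_a, _⟩ := havoidA1 a ha
    obtain ⟨hav_b, _⟩ := havoidA1 b hb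
    have a0 := hav_a 0 (by norm_num)
    have b0 := hav_b 0 (by norm_num)
    unfold g2 at hab; split_ifs at hab <;> omega
  have hCmem : ∀ j ∈ C, j ∈ B ∧ ¬ Span j d₁ ∧ ¬ Span j (d₂ - 1) := by
    intro j hj
    simp only [hC, Finset.mem_image] at hj
    obtain ⟨s, hs, rfl⟩ := hj
    obtain ⟨hav, hP⟩ := havoidA1 s hs
    obtain ⟨⟨hl, hc⟩, hns1, hns2⟩ := map_back h hn hav hP
    refine ⟨?_, hns1, hns2⟩
    simp only [hB, Finset.mem_filter, Finset.mem_range]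
    rw [POcc_y_iff h hn]
    exact ⟨by omega, hl, hc⟩
  have hCsub : C ⊆ B := fun j hj => (hCmem j hj).1
  -- A2 is small
  have hA2sub : A2 ⊆ Finset.Ico (e - 3) (e + 1) := by
    intro s hs
    simp only [hA2, Finset.mem_filter] at hs
    simp only [Finset.mem_Ico]
    omega
  by_cases hsmall : A2.card ≤ 3
  · have := Finset.card_le_card hCsub
    omega
  · -- A2 has exactly 4 elements: e - 3, …, e, giving 7 consecutive c's around e
    have hIcoCard : (Finset.Ico (e - 3) (e + 1)).card ≤ 4 := by rw [Nat.card_Ico]; omega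
    have h4 : A2.card = 4 := le_antisymm (le_trans (Finset.card_le_card hA2sub) hIcoCard)
      (by omega)
    have he3 : 3 ≤ e := by
      by_contra hlt
      have : (Finset.Ico (e - 3) (e + 1)).card ≤ 3 := by rw [Nat.card_Ico]; omega
      have := Finset.card_le_card hA2sub
      omega
    have hEq : A2 = Finset.Ico (e - 3) (e + 1) := by
      apply Finset.eq_of_subset_of_card_le hA2sub
      rw [Nat.card_Ico]; omega
    have hm1 : e - 3 ∈ A2 := by rw [hEq]; simp only [Finset.mem_Ico]; omega
    have hm2 : e ∈ A2 := by rw [hEq]; simp only [Finset.mem_Ico]; omega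
    have hP1 : POcc c x (e - 3) := by
      simp only [hA2, hA, Finset.mem_filter] at hm1; exact hm1.1.2
    have hP2 : POcc c x e := by
      simp only [hA2, hA, Finset.mem_filter] at hm2; exact hm2.1.2
    have hz : ∀ p, e - 3 ≤ p → p ≤ e + 3 → x.getD p false = c := by
      intro p hp1 hp2
      rcases le_or_gt p e with hpe | hpe
      · have := hP1.2 (p - (e - 3)) (by omega)
        rwa [show e - 3 + (p - (e - 3)) = p by omega] at this
      · have := hP2.2 (p - e) (by omega)
        rwa [show e + (p - e) = p by omega] at this
    have hfout : f + 3 < e ∨ e + 3 < f := by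
      by_contra hcon
      push_neg at hcon
      exact hvf (hz f (by omega) (by omega))
    have hlen : e + 4 ≤ x.length := hP2.1
    -- the extra occurrence in y
    have hfn : f < x.length := by rcases hef with ⟨rfl, rfl⟩ | ⟨rfl, rfl⟩ <;> omega
    have hPy : g2 d₁ d₂ (e - 3) + 4 ≤ x.length - 2 ∧
        ∀ t, t < 4 → x.getD (h2 d₁ d₂ (g2 d₁ d₂ (e - 3) + t)) false = c := by
      constructor
      · rcases hef with ⟨rfl, rfl⟩ | ⟨rfl, rfl⟩ <;>
          (unfold g2; split_ifs <;> omega)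
      · intro t ht
        have hb : e - 3 ≤ h2 d₁ d₂ (g2 d₁ d₂ (e - 3) + t) ∧
            h2 d₁ d₂ (g2 d₁ d₂ (e - 3) + t) ≤ e + 3 := by
          rcases hef with ⟨rfl, rfl⟩ | ⟨rfl, rfl⟩ <;>
            (unfold h2 g2; split_ifs <;> omega)
        exact hz _ hb.1 hb.2
    have hjB : g2 d₁ d₂ (e - 3) ∈ B := by
      simp only [hB, Finset.mem_filter, Finset.mem_range]
      rw [POcc_y_iff h hn]
      exact ⟨by omega, hPy⟩
    have hjSpan : Span (g2 d₁ d₂ (e - 3)) d₁ ∨ Span (g2 d₁ d₂ (e - 3)) (d₂ - 1) := by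
      rcases hef with ⟨rfl, rfl⟩ | ⟨rfl, rfl⟩
      · left; unfold Span g2; split_ifs <;> omega
      · right; unfold Span g2; split_ifs <;> omega
    have hjC : g2 d₁ d₂ (e - 3) ∉ C := by
      intro hjc
      obtain ⟨_, hns1, hns2⟩ := hCmem _ hjc
      tauto
    have hins : insert (g2 d₁ d₂ (e - 3)) C ⊆ B := by
      intro a ha
      rcases Finset.mem_insert.mp ha with rfl | ha
      · exact hjB
      · exact hCsub ha
    have hcard : C.card + 1 ≤ B.card := by
      have := Finset.card_le_card hins
      rw [Finset.card_insert_of_notMem hjC] at this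
      omega
    omega

lemma all_noSpan (h : d₁ < d₂) (hn : d₂ < x.length) (c : Bool)
    (hA : ∀ s, POcc c x s → ∀ t, t < 4 → s + t ≠ d₁ ∧ s + t ≠ d₂)
    (hmod : Nw (List.replicate 4 c) x % 7
      = Nw (List.replicate 4 c) (deleteIdxs x {d₁, d₂}) % 7) :
    ∀ j, POcc c (deleteIdxs x {d₁, d₂}) j → ¬ Span j d₁ ∧ ¬ Span j (d₂ - 1) := by
  classical
  rw [Nw_eq, Nw_eq, deleteIdxs_length x d₁ d₂ h hn] at hmod
  set B := (Finset.range (x.length - 2)).filter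
    (fun j => POcc c (deleteIdxs x {d₁, d₂}) j) with hB
  set A := (Finset.range x.length).filter (fun j => POcc c x j) with hArw
  set Bns := B.filter (fun j => ¬ Span j d₁ ∧ ¬ Span j (d₂ - 1)) with hBns
  have h1 : A.card ≤ Bns.card := by
    apply Finset.card_le_card_of_injOn (g2 d₁ d₂)
    · intro s hs
      simp only [hArw, Finset.mem_coe, Finset.mem_filter, Finset.mem_range] at hs
      obtain ⟨hsr, hP⟩ := hs
      obtain ⟨⟨hl, hc⟩, hns1, hns2⟩ := map_back h hn (hA s hP) hP
      simp only [hBns, hB, Finset.mem_coe, Finset.mem_filter, Finset.mem_range]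
      rw [POcc_y_iff h hn]
      exact ⟨⟨by omega, by omega, hc⟩, hns1, hns2⟩
    · intro a ha b hb hab
      simp only [hArw, Finset.mem_coe, Finset.mem_filter, Finset.mem_range] at ha hb
      have a0 := (hA a ha.2 0 (by norm_num))
      have b0 := (hA b hb.2 0 (by norm_num))
      simp only [Nat.add_zero] at a0 b0
      unfold g2 at hab; split_ifs at hab <;> omega
  have h2 : Bns.card ≤ A.card := by
    apply Finset.card_le_card_of_injOn (h2 d₁ d₂)
    · intro j hj
      simp only [hBns, hB, Finset.mem_coe, Finset.mem_filter, Finset.mem_range] at hj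
      obtain ⟨⟨hjr, hP⟩, hns1, hns2⟩ := hj
      rw [POcc_y_iff h hn] at hP
      obtain ⟨hl, hc⟩ := hP
      have hPx := map_noSpan h hn hl hc hns1 hns2
      simp only [hArw, Finset.mem_coe, Finset.mem_filter, Finset.mem_range]
      exact ⟨by have := hPx.1; omega, hPx⟩
    · intro a _ b _ hab
      exact h2_injOn h hab
  have hsplit : Bns.card + (B.filter (fun j => ¬ (¬ Span j d₁ ∧ ¬ Span j (d₂ - 1)))).card
      = B.card := Finset.card_filter_add_card_filter_not _
  have h3 : (B.filter (fun j => ¬ (¬ Span j d₁ ∧ ¬ Span j (d₂ - 1)))).card ≤ 6 := by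
    have hsub : B.filter (fun j => ¬ (¬ Span j d₁ ∧ ¬ Span j (d₂ - 1)))
        ⊆ Finset.Ico (d₁ - 3) d₁ ∪ Finset.Ico (d₂ - 1 - 3) (d₂ - 1) := by
      intro j hj
      simp only [Finset.mem_filter, not_and_or, not_not] at hj
      rcases hj.2 with hsp | hsp <;> unfold Span at hsp <;>
        simp only [Finset.mem_union, Finset.mem_Ico]
      · left; omega
      · right; omega
    calc _ ≤ (Finset.Ico (d₁ - 3) d₁ ∪ Finset.Ico (d₂ - 1 - 3) (d₂ - 1)).card :=
          Finset.card_le_card hsub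
      _ ≤ (Finset.Ico (d₁ - 3) d₁).card + (Finset.Ico (d₂ - 1 - 3) (d₂ - 1)).card :=
          Finset.card_union_le _ _
      _ ≤ 6 := by rw [Nat.card_Ico, Nat.card_Ico]; omega
  have hBnsB : Bns ⊆ B := Finset.filter_subset _ _
  have hcards : Bns.card ≤ B.card := Finset.card_le_card hBnsB
  have hEqCard : B.card ≤ Bns.card := by omega
  have hEq : Bns = B := Finset.eq_of_subset_of_card_le hBnsB hEqCard
  intro j hj
  have hjB : j ∈ B := by
    simp only [hB, Finset.mem_filter, Finset.mem_range]
    have := hj.1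
    rw [deleteIdxs_length x d₁ d₂ h hn] at this
    exact ⟨by omega, hj⟩
  rw [← hEq] at hjB
  simp only [hBns, Finset.mem_filter] at hjB
  exact hjB.2

lemma span_info (h : d₁ < d₂) (hn : d₂ < x.length) {c : Bool} {j e f : ℕ}
    (hef : (e = d₁ ∧ f = d₂) ∨ (e = d₂ ∧ f = d₁))
    (hve : x.getD e false = c)
    (hl : j + 4 ≤ x.length - 2)
    (hc : ∀ t, t < 4 → x.getD (h2 d₁ d₂ (j + t)) false = c)
    (hs : Span j (g2 d₁ d₂ f)) :
    x.getD (f - 1) false = c ∧ x.getD (f + 1) false = c ∧ 1 ≤ f := by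
  unfold Span at hs
  rcases hef with ⟨he, hf⟩ | ⟨he, hf⟩
  · -- e = d₁, f = d₂
    rw [he] at hve
    rw [hf] at hs ⊢
    have hu : g2 d₁ d₂ d₂ = d₂ - 1 := by unfold g2; split_ifs <;> omega
    rw [hu] at hs
    refine ⟨?_, ?_, by omega⟩
    · by_cases hcase : d₂ - 2 < d₁
      · have hde : d₁ = d₂ - 1 := by omega
        rw [← hde]; exact hve
      · have key : h2 d₁ d₂ (j + (d₂ - 2 - j)) = d₂ - 1 := by
          unfold h2; split_ifs <;> omega
        have := hc (d₂ - 2 - j) (by omega)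
        rwa [key] at this
    · have key : h2 d₁ d₂ (j + (d₂ - 1 - j)) = d₂ + 1 := by
        unfold h2; split_ifs <;> omega
      have := hc (d₂ - 1 - j) (by omega)
      rwa [key] at this
  · -- e = d₂, f = d₁
    rw [he] at hve
    rw [hf] at hs ⊢
    have hu : g2 d₁ d₂ d₁ = d₁ := by unfold g2; split_ifs <;> omega
    rw [hu] at hs
    refine ⟨?_, ?_, by omega⟩
    · have key : h2 d₁ d₂ (j + (d₁ - 1 - j)) = d₁ - 1 := by
        unfold h2; split_ifs <;> omega
      have := hc (d₁ - 1 - j) (by omega)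
      rwa [key] at this
    · by_cases hcase : d₁ + 1 < d₂
      · have key : h2 d₁ d₂ (j + (d₁ - j)) = d₁ + 1 := by
          unfold h2; split_ifs <;> omega
        have := hc (d₁ - j) (by omega)
        rwa [key] at this
      · have hde : d₂ = d₁ + 1 := by omega
        rw [← hde]; exact hve

end Core

end CA


/-- If a `0` and a `1` are deleted with `(N₀₀₀₀(y) - N₀₀₀₀(x)) mod 7 ∈ {1,2,3}` and
`N₁₁₁₁(x) ≡ N₁₁₁₁(y) (mod 7)`, then the deleted `1` lies in a run of length `1` and
`1111` is preserved. -/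
theorem created_0000_case (x y : List Bool) (k₀ k₁ : ℕ) (hne : k₀ ≠ k₁)
    (h0 : k₀ < x.length) (h1 : k₁ < x.length)
    (hv0 : x.getD k₀ false = false) (hv1 : x.getD k₁ false = true)
    (hy : y = deleteIdxs x ({k₀, k₁} : Finset ℕ))
    (hm0 : ((Nw w0000 y : ℤ) - (Nw w0000 x : ℤ)) % 7 ∈ ({1, 2, 3} : Set ℤ))
    (hm1 : Nw w1111 x ≡ Nw w1111 y [MOD 7]) :
    inRun x k₁ 1 ∧ Preserved w1111 x y := by
  classical
  obtain ⟨d₁, d₂, hd, hdn, hSet, hef⟩ :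
      ∃ d₁ d₂ : ℕ, d₁ < d₂ ∧ d₂ < x.length ∧
        ({k₀, k₁} : Finset ℕ) = {d₁, d₂} ∧
        ((k₀ = d₁ ∧ k₁ = d₂) ∨ (k₀ = d₂ ∧ k₁ = d₁)) := by
    rcases Ne.lt_or_gt hne with hlt | hlt
    · exact ⟨k₀, k₁, hlt, h1, rfl, Or.inl ⟨rfl, rfl⟩⟩
    · exact ⟨k₁, k₀, hlt, h0, Finset.pair_comm k₀ k₁, Or.inr ⟨rfl, rfl⟩⟩
  rw [hSet] at hy
  subst hy
  have hw0 : w0000 = List.replicate 4 false := rfl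
  have hw1 : w1111 = List.replicate 4 true := rfl
  rw [hw0] at hm0
  rw [hw1] at hm1
  have hlow := CA.count_lower hd hdn false k₀ k₁ hef hv0 (by rw [hv1]; simp)
  have hu' : (x.getD d₁ false = false ∧ CA.g2 d₁ d₂ k₁ = d₂ - 1) ∨
      (x.getD d₂ false = false ∧ CA.g2 d₁ d₂ k₁ = d₁) := by
    rcases hef with ⟨ha', hb'⟩ | ⟨ha', hb'⟩
    · left
      refine ⟨by rw [← ha']; exact hv0, ?_⟩
      rw [hb']; unfold CA.g2; split_ifs <;> omega
    · right
      refine ⟨by rw [← ha']; exact hv0, ?_⟩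
      rw [hb']; unfold CA.g2; split_ifs <;> omega
  have hup := CA.count_upper hd hdn false (CA.g2 d₁ d₂ k₁) hu'
  have hcard3 := CA.span_card_le (x.length - 2) (CA.g2 d₁ d₂ k₁)
    (fun j => CA.POcc false (deleteIdxs x {d₁, d₂}) j)
  simp only [Set.mem_insert_iff, Set.mem_singleton_iff] at hm0
  have hpos : 0 < ((Finset.range (x.length - 2)).filter
      (fun j => CA.POcc false (deleteIdxs x {d₁, d₂}) j ∧
        CA.Span j (CA.g2 d₁ d₂ k₁))).card := by omega
  obtain ⟨j, hj⟩ := Finset.card_pos.mp hpos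
  simp only [Finset.mem_filter, Finset.mem_range] at hj
  obtain ⟨hjr, hPj, hSj⟩ := hj
  rw [CA.POcc_y_iff hd hdn] at hPj
  obtain ⟨hjl, hjc⟩ := hPj
  obtain ⟨hL, hR, hf1⟩ := CA.span_info hd hdn hef hv0 hjl hjc hSj
  have hrun : runAt x k₁ 1 := by
    refine ⟨one_pos, by omega, ?_, ?_, ?_⟩
    · intro t ht1 ht2
      have ht : t = k₁ := by omega
      rw [ht]
    · right; rw [hL, hv1]; simp
    · right; rw [hR, hv1]; simp
  have hA1111 : ∀ s, CA.POcc true x s → ∀ t, t < 4 → s + t ≠ d₁ ∧ s + t ≠ d₂ := by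
    intro s hP t ht
    have hvt := hP.2 t ht
    have hnk0 : s + t ≠ k₀ := by
      intro hh; rw [hh, hv0] at hvt; exact absurd hvt (by simp)
    have hnk1 : s + t ≠ k₁ := by
      intro hh
      rcases Nat.eq_zero_or_pos t with rfl | htpos
      · have h2' := hP.2 1 (by norm_num)
        rw [show s + 1 = k₁ + 1 by omega, hR] at h2'
        exact absurd h2' (by simp)
      · have h2' := hP.2 (t - 1) (by omega)
        rw [show s + (t - 1) = k₁ - 1 by omega, hL] at h2'
        exact absurd h2' (by simp)
    rcases hef with ⟨ha', hb'⟩ | ⟨ha', hb'⟩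
    · exact ⟨ha' ▸ hnk0, hb' ▸ hnk1⟩
    · exact ⟨hb' ▸ hnk1, ha' ▸ hnk0⟩
  have hNoSpan := CA.all_noSpan hd hdn true hA1111 hm1
  refine ⟨⟨k₁, hrun, le_refl _, by omega⟩,
    ({k₀, k₁} : Finset ℕ), ?_, ?_, by rw [hSet], ?_, ?_⟩
  · intro k hk
    simp only [Finset.mem_insert, Finset.mem_singleton] at hk
    rcases hk with rfl | rfl <;> assumption
  · have hc2 : ({k₀, k₁} : Finset ℕ).card = 2 := by
      rw [Finset.card_insert_of_notMem (by simpa using hne), Finset.card_singleton]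
    rw [hc2, CA.deleteIdxs_length x d₁ d₂ hd hdn]
    omega
  · intro i hocc k hk hik
    rw [show w1111 = List.replicate 4 true from rfl, CA.occursAt_iff] at hocc
    rw [show w1111.length = 4 from rfl] at hik
    simp only [Finset.mem_insert, Finset.mem_singleton] at hk
    have hav := hA1111 i hocc (k - i) (by omega)
    rw [show i + (k - i) = k by omega] at hav
    rcases hk with rfl | rfl <;> rcases hef with ⟨ha', hb'⟩ | ⟨ha', hb'⟩ <;> omega
  · intro j' hocc k hk hjk
    rw [show w1111 = List.replicate 4 true from rfl, CA.occursAt_iff] at hocc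
    have hns := hNoSpan j' hocc
    rw [show w1111.length = 4 from rfl] at hjk
    simp only [Finset.mem_insert, Finset.mem_singleton] at hk
    rw [hSet, CA.junction_eq d₁ d₂ hd] at hjk
    have hg1 : CA.g2 d₁ d₂ d₁ = d₁ := by unfold CA.g2; split_ifs <;> omega
    have hg2 : CA.g2 d₁ d₂ d₂ = d₂ - 1 := by unfold CA.g2; split_ifs <;> omega
    unfold CA.Span at hns
    rcases hk with rfl | rfl <;> rcases hef with ⟨ha', hb'⟩ | ⟨ha', hb'⟩
    · rw [ha', hg1] at hjk; exact hns.1 hjk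
    · rw [ha', hg2] at hjk; exact hns.2 hjk
    · rw [hb', hg2] at hjk; exact hns.2 hjk
    · rw [hb', hg1] at hjk; exact hns.1 hjk
end

section
/- Let x be a binary string and let y be obtained from x by deleting a single symbol 0 that constitutes a run of length 1 in x. If this deletion creates or destroys an occurrence of 110011 (i.e., the deleted position lies inside an occurrence of 110011 in x, or some occurrence of 110011 in y spans the deletion junction) and moreover creates an occurrence of 1111, then the string 11011 is preserved from x to y, and the sequences τ_{≥2}(x) and τ_{≥2}(y) have the same length and differ in exactly one coordinate (Hamming distance 1). -/
namespace ClaimAux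
open List

/-! ### splitBy / tau1 machinery -/

private theorem splitByLoop_eq_append' {α : Type*} {r : α → α → Bool} {l : List α} {a : α}
    {g : List α} (gs : List (List α)) :
    splitBy.loop r l a g gs = gs.reverse ++ splitBy.loop r l a g [] := by
  induction l generalizing a g gs with
  | nil => simp [splitBy.loop]
  | cons b l IH =>
    simp_rw [splitBy.loop]
    split <;> rw [IH]
    conv_rhs => rw [IH]
    simp

theorem splitBy_loop_bool (l : List Bool) : ∀ (a : Bool) (g : List Bool),
    splitBy.loop (· == ·) l a g [] =
      (g.reverse ++ a :: l.takeWhile (· == a)) :: splitBy (· == ·) (l.dropWhile (· == a)) := by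
  induction l with
  | nil => intro a g; simp [splitBy.loop, splitBy]
  | cons b l IH =>
    intro a g
    rw [splitBy.loop]
    by_cases hab : a = b
    · subst hab
      simp only [beq_self_eq_true]
      rw [IH a (a :: g)]
      simp [takeWhile_cons, dropWhile_cons]
    · have h1 : (a == b) = false := by simp [hab]
      have h2 : (b == a) = false := by simp [Ne.symm hab]
      simp only [h1]
      rw [splitByLoop_eq_append' [(a :: g).reverse]]
      simp only [takeWhile_cons, dropWhile_cons, h2]
      simp [splitBy]

theorem splitBy_cons_bool (a : Bool) (l : List Bool) :
    splitBy (· == ·) (a :: l) =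
      (a :: l.takeWhile (· == a)) :: splitBy (· == ·) (l.dropWhile (· == a)) := by
  rw [splitBy, splitBy_loop_bool]; rfl

theorem tau1_nil : tau1 [] = [] := rfl

theorem tau1_cons_true (l : List Bool) :
    tau1 (true :: l) = ((l.takeWhile (· == true)).length + 1) :: tau1 (l.dropWhile (· == true)) := by
  unfold tau1
  rw [splitBy_cons_bool]
  simp
  rfl

theorem tau1_cons_false (l : List Bool) :
    tau1 (false :: l) = tau1 (l.dropWhile (· == false)) := by
  unfold tau1
  rw [splitBy_cons_bool]
  simp

theorem tau1_dropWhile_false (l : List Bool) :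
    tau1 (l.dropWhile (· == false)) = tau1 l := by
  cases l with
  | nil => rfl
  | cons a l =>
    cases a
    · rw [tau1_cons_false]
      simp [dropWhile_cons]
    · simp [dropWhile_cons]

theorem tau1_false_cons (l : List Bool) : tau1 (false :: l) = tau1 l := by
  rw [tau1_cons_false, tau1_dropWhile_false]

theorem takeWhile_true_eq_nil {B : List Bool} (hB : B = [] ∨ B.head? = some false) :
    B.takeWhile (· == true) = [] := by
  rcases hB with rfl | hB
  · rfl
  · cases B with
    | nil => rfl
    | cons b B' =>
      simp only [head?_cons, Option.some.injEq] at hB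
      subst hB
      simp [takeWhile_cons]

theorem dropWhile_true_eq_self {B : List Bool} (hB : B = [] ∨ B.head? = some false) :
    B.dropWhile (· == true) = B := by
  rcases hB with rfl | hB
  · rfl
  · cases B with
    | nil => rfl
    | cons b B' =>
      simp only [head?_cons, Option.some.injEq] at hB
      subst hB
      simp [dropWhile_cons]

theorem tau1_run (n : ℕ) (B : List Bool) (hn : 0 < n) (hB : B = [] ∨ B.head? = some false) :
    tau1 (List.replicate n true ++ B) = n :: tau1 B := by
  obtain ⟨m, rfl⟩ : ∃ m, n = m + 1 := ⟨n - 1, by omega⟩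
  rw [replicate_succ, cons_append, tau1_cons_true]
  have hall : ∀ a ∈ List.replicate m true, (a == true) = true := by
    intro a ha; simp [eq_of_mem_replicate ha]
  rw [takeWhile_append_of_pos hall, dropWhile_append_of_pos hall,
    takeWhile_true_eq_nil hB, dropWhile_true_eq_self hB]
  simp

theorem tau1_break : ∀ (N : ℕ) (A C : List Bool), A.length ≤ N →
    (A = [] ∨ A.getLast? = some false) → C.head? = some true →
    tau1 (A ++ C) = tau1 A ++ tau1 C := by
  intro N
  induction N with
  | zero =>
    intro A C hlen _ _
    have : A = [] := by cases A with | nil => rfl | cons a A' => simp at hlen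
    subst this; simp [tau1_nil]
  | succ N IH =>
    intro A C hlen hA hC
    cases A with
    | nil => simp [tau1_nil]
    | cons a A' =>
      have hA' : (a :: A').getLast? = some false := hA.resolve_left (by simp)
      cases a with
      | false =>
        rw [cons_append, tau1_false_cons, tau1_false_cons]
        refine IH A' C (by simp at hlen; omega) ?_ hC
        cases A' with
        | nil => exact Or.inl rfl
        | cons b A'' => exact Or.inr (by rw [← getLast?_cons_cons (a := false)]; exact hA')
      | true =>
        have hA'ne : A' ≠ [] := by rintro rfl; simp at hA'
        have hlastA' : A'.getLast? = some false := by
          cases A' with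
          | nil => exact absurd rfl hA'ne
          | cons b A'' => rw [← getLast?_cons_cons (a := true)]; exact hA'
        have hfalse : false ∈ A' := mem_of_mem_getLast? (by rw [hlastA']; rfl)
        have hdne : A'.dropWhile (· == true) ≠ [] := by
          intro h
          rw [List.dropWhile_eq_nil_iff] at h
          simpa using h false hfalse
        have hdlast : (A'.dropWhile (· == true)).getLast? = some false := by
          obtain ⟨t, ht⟩ := List.dropWhile_suffix (l := A') (· == true)
          cases hd : (A'.dropWhile (· == true)).getLast? with
          | none => exact absurd (getLast?_eq_none_iff.mp hd) hdne
          | some v =>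
            have h3 : (t ++ A'.dropWhile (· == true)).getLast? = some false := by
              rw [ht]; exact hlastA'
            rw [getLast?_append, hd] at h3
            simp at h3
            simp [hd, h3]
        have hdlen : (A'.dropWhile (· == true)).length ≤ N := by
          have h1 := (List.dropWhile_suffix (l := A') (· == true)).length_le
          simp at hlen; omega
        have hne : ¬ ((A'.takeWhile (· == true)).length = A'.length) := by
          intro h
          have heq : A'.takeWhile (· == true) = A' :=
            (List.takeWhile_prefix _).eq_of_length h
          have hmem : false ∈ A'.takeWhile (· == true) := by rw [heq]; exact hfalse
          have := mem_takeWhile_imp hmem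
          simp at this
        have h1 : (A' ++ C).takeWhile (· == true) = A'.takeWhile (· == true) := by
          rw [takeWhile_append, if_neg hne]
        have h2 : (A' ++ C).dropWhile (· == true) = A'.dropWhile (· == true) ++ C := by
          rw [dropWhile_append, if_neg (by simpa using hfalse)]
        rw [cons_append, tau1_cons_true, tau1_cons_true, h1, h2,
          IH _ C hdlen (Or.inr hdlast) hC]
        rfl

theorem tau1_mid (A B : List Bool) (n : ℕ) (hn : 0 < n)
    (hA : A = [] ∨ A.getLast? = some false) (hB : B = [] ∨ B.head? = some false) :
    tau1 (A ++ (List.replicate n true ++ B)) = tau1 A ++ n :: tau1 B := by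
  have hC : (List.replicate n true ++ B).head? = some true := by
    obtain ⟨m, rfl⟩ : ∃ m, n = m + 1 := ⟨n - 1, by omega⟩
    rw [replicate_succ]; rfl
  rw [tau1_break A.length A _ le_rfl hA hC, tau1_run n B hn hB]

/-! ### deletion / getD machinery -/

theorem getD_drop' (x : List Bool) (n i : ℕ) :
    (x.drop n).getD i false = x.getD (n + i) false := by
  simp [List.getElem?_drop]

theorem getD_take' (x : List Bool) {k i : ℕ} (h : i < k) :
    (x.take k).getD i false = x.getD i false := by
  simp [List.getElem?_take_of_lt h]

theorem deleteIdxs_singleton (x : List Bool) (k : ℕ) (hk : k < x.length) :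
    deleteIdxs x ({k} : Finset ℕ) = x.take k ++ x.drop (k + 1) := by
  unfold deleteIdxs
  have e1 : (k : ℕ) :: List.range' (k + 1) (x.length - (k + 1)) =
      List.range' k (x.length - k) := by
    rw [show x.length - k = (x.length - (k + 1)) + 1 by omega, range'_succ]
  have hr : List.range x.length =
      List.range k ++ k :: List.range' (k + 1) (x.length - (k + 1)) := by
    rw [range_eq_range', e1, range_eq_range']
    have := List.range'_append_1 (s := 0) (m := k) (n := x.length - k)
    rw [Nat.zero_add] at this
    rw [this]
    congr 1
    omega
  rw [hr, filter_append, filter_cons]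
  have h1 : (List.range k).filter (fun i => decide (i ∉ ({k} : Finset ℕ))) = List.range k := by
    rw [filter_eq_self]
    intro a ha
    simp only [mem_range] at ha
    simp [Finset.mem_singleton]
    omega
  have h2 : (decide (k ∉ ({k} : Finset ℕ))) = false := by simp
  have h3 : (List.range' (k + 1) (x.length - (k + 1))).filter
      (fun i => decide (i ∉ ({k} : Finset ℕ))) = List.range' (k + 1) (x.length - (k + 1)) := by
    rw [filter_eq_self]
    intro a ha
    rw [List.mem_range'_1] at ha
    simp [Finset.mem_singleton]
    omega
  rw [h1, h2, h3]
  simp only [if_neg Bool.false_ne_true, map_append]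
  congr 1
  · apply List.ext_getElem
    · simp; omega
    · intro i h1 h2
      simp only [getElem_map, getElem_range, getElem_take]
      have hi : i < x.length := by simp at h1; omega
      exact List.getD_eq_getElem _ _ hi
  · apply List.ext_getElem
    · simp
    · intro i h1 h2
      simp only [getElem_map, getElem_range', List.getElem_drop]
      have hi : k + 1 + 1 * i < x.length := by simp at h1; omega
      rw [List.getD_eq_getElem _ _ hi]
      congr 1
      omega

theorem occursAt_getD {w x : List Bool} {i : ℕ} (h : occursAt w x i) (t : ℕ) (ht : t < w.length) :
    x.getD (i + t) false = w.getD t false := by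
  obtain ⟨s, hs⟩ := h
  have h2 : (x.drop i).getD t false = w.getD t false := by
    rw [← hs]; exact List.getD_append _ _ _ _ ht
  rw [← h2, getD_drop']

theorem occursAt_length {w x : List Bool} {i : ℕ} (h : occursAt w x i) (hw : w ≠ []) :
    i + w.length ≤ x.length := by
  obtain ⟨s, hs⟩ := h
  have hl := congrArg List.length hs
  simp only [length_append, length_drop] at hl
  have hi : i ≤ x.length := by
    by_contra h'
    have hnil : x.drop i = [] := by
      apply List.drop_eq_nil_of_le; omega
    rw [hnil] at hs
    exact hw (List.append_eq_nil_iff.mp hs).1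
  omega

theorem exists_leading_run (q : List Bool) :
    ∃ c B', q = List.replicate c true ++ B' ∧ (B' = [] ∨ B'.head? = some false) ∧
      c = (q.takeWhile (· == true)).length := by
  refine ⟨(q.takeWhile (· == true)).length, q.dropWhile (· == true), ?_, ?_, rfl⟩
  · have h1 : q.takeWhile (· == true) = List.replicate (q.takeWhile (· == true)).length true := by
      rw [eq_replicate_iff]
      refine ⟨rfl, fun b hb => ?_⟩
      have := mem_takeWhile_imp hb
      simpa using this
    conv_lhs => rw [← takeWhile_append_dropWhile (p := (· == true)) (l := q)]
    rw [← h1]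
  · cases hq : q.dropWhile (· == true) with
    | nil => exact Or.inl rfl
    | cons b B'' =>
      right
      have := head?_dropWhile_not (· == true) q
      rw [hq] at this
      simp only [head?_cons] at this ⊢
      cases b
      · rfl
      · simp at this

theorem exists_trailing_run (p : List Bool) :
    ∃ A a, p = A ++ List.replicate a true ∧ (A = [] ∨ A.getLast? = some false) := by
  obtain ⟨c, B', hq, hB', -⟩ := exists_leading_run p.reverse
  refine ⟨B'.reverse, c, ?_, ?_⟩
  · have := congrArg List.reverse hq
    rw [reverse_reverse, reverse_append, reverse_replicate] at this
    exact this
  · rcases hB' with h | h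
    · left; simp [h]
    · right; rw [List.getLast?_reverse]; exact h

theorem junction_singleton (k : ℕ) : junction ({k} : Finset ℕ) k = k := by
  unfold junction
  rw [Finset.filter_true_of_mem, Finset.card_range]
  intro m hm
  simp only [Finset.mem_range] at hm
  simp only [Finset.mem_singleton]
  omega

theorem trailing_ge_two {p A : List Bool} {a : ℕ}
    (hp : p = A ++ List.replicate a true)
    (hA : A = [] ∨ A.getLast? = some false)
    (hlen : 2 ≤ p.length)
    (h1 : p.getD (p.length - 1) false = true)
    (h2 : p.getD (p.length - 2) false = true) : 2 ≤ a := by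
  by_contra hcon
  push_neg at hcon
  have hAlast : A ≠ [] → A.getD (A.length - 1) false = false := by
    intro hne
    rcases hA with rfl | h
    · exact absurd rfl hne
    · rw [getLast?_eq_getElem?] at h
      simp [h]
  interval_cases a
  · simp only [List.replicate_zero, append_nil] at hp
    subst hp
    rcases hA with rfl | h
    · simp at hlen
    · rw [getLast?_eq_getElem?] at h
      rw [List.getD_eq_getElem?_getD, h] at h1
      simp at h1
  · simp only [List.replicate_one] at hp
    subst hp
    have hAne : A ≠ [] := by
      intro h; subst h; simp at hlen
    have hl : (A ++ [true]).length = A.length + 1 := by simp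
    have hidx : (A ++ [true]).length - 2 = A.length - 1 := by omega
    rw [hidx, List.getD_append _ _ _ _ (by
      have := List.length_pos_iff.mpr hAne; omega)] at h2
    rw [hAlast hAne] at h2
    exact absurd h2 (by simp)

theorem leading_ge_two {q B' : List Bool} {c : ℕ}
    (hq : q = List.replicate c true ++ B')
    (hB : B' = [] ∨ B'.head? = some false)
    (h1 : q.getD 0 false = true)
    (h2 : q.getD 1 false = true) : 2 ≤ c := by
  by_contra hcon
  push_neg at hcon
  have hBhead : B'.getD 0 false = false := by
    rcases hB with rfl | h
    · rfl
    · rw [head?_eq_getElem?] at h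
      simp [h]
  interval_cases c
  · simp only [List.replicate_zero, nil_append] at hq
    subst hq
    rw [hBhead] at h1
    exact absurd h1 (by simp)
  · simp only [List.replicate_one, singleton_append] at hq
    subst hq
    simp only [List.getD_cons_succ] at h2
    rw [hBhead] at h2
    exact absurd h2 (by simp)

theorem hamming_one (L T : List ℕ) (m m' : ℕ) (h : m ≠ m') :
    (L ++ m :: T).length = (L ++ m' :: T).length ∧
    ((Finset.range (L ++ m :: T).length).filter
      (fun i => (L ++ m :: T).getD i 0 ≠ (L ++ m' :: T).getD i 0)).card = 1 := by
  refine ⟨by simp, ?_⟩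
  have hset : ((Finset.range (L ++ m :: T).length).filter
      (fun i => (L ++ m :: T).getD i 0 ≠ (L ++ m' :: T).getD i 0)) = {L.length} := by
    ext i
    simp only [Finset.mem_filter, Finset.mem_range, Finset.mem_singleton, length_append,
      length_cons]
    constructor
    · rintro ⟨hi, hne⟩
      by_contra hiL
      apply hne
      rcases Nat.lt_trichotomy i L.length with hlt | heq | hgt
      · rw [List.getD_append _ _ _ _ hlt, List.getD_append _ _ _ _ hlt]
      · exact absurd heq hiL
      · rw [List.getD_append_right _ _ _ _ (by omega), List.getD_append_right _ _ _ _ (by omega)]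
        obtain ⟨u, hu⟩ : ∃ u, i - L.length = u + 1 := ⟨i - L.length - 1, by omega⟩
        rw [hu]
        simp only [List.getD_cons_succ]
    · rintro rfl
      refine ⟨by omega, ?_⟩
      rw [List.getD_append_right _ _ _ _ le_rfl, List.getD_append_right _ _ _ _ le_rfl]
      simpa using h
  rw [hset, Finset.card_singleton]

end ClaimAux
/-- Claim 3: if deleting a `0` that constitutes a run of length 1 creates or destroys a
`110011` and creates a `1111`, then `11011` is preserved and `τ≥2(x)`, `τ≥2(y)` have the
same length and differ in exactly one coordinate. -/
theorem claim_if1101110112 (x y : List Bool) (k : ℕ) (hk : k < x.length)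
    (hval : x.getD k false = false) (hrun : runAt x k 1)
    (hy : y = deleteIdxs x ({k} : Finset ℕ))
    (h110011 : (∃ i, occursAt w110011 x i ∧ i ≤ k ∧ k < i + w110011.length) ∨
      (∃ j, occursAt w110011 y j ∧ j < k ∧ k < j + w110011.length))
    (h1111created : ∃ j, occursAt w1111 y j ∧ j < k ∧ k < j + w1111.length) :
    Preserved w11011 x y ∧ (tauGe2 x).length = (tauGe2 y).length ∧
    ((Finset.range (tauGe2 x).length).filter
      (fun i => (tauGe2 x).getD i 0 ≠ (tauGe2 y).getD i 0)).card = 1 := by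
  clear hrun
  have hyd : y = x.take k ++ x.drop (k + 1) := by
    rw [hy, ClaimAux.deleteIdxs_singleton x k hk]
  have hylen : y.length = x.length - 1 := by
    rw [hyd]; simp only [List.length_append, List.length_take, List.length_drop]; omega
  have ygetD_lt : ∀ m, m < k → y.getD m false = x.getD m false := by
    intro m hm
    rw [hyd, List.getD_append _ _ _ _ (by rw [List.length_take]; omega),
      ClaimAux.getD_take' x hm]
  have ygetD_ge : ∀ m, k ≤ m → y.getD m false = x.getD (m + 1) false := by
    intro m hm
    rw [hyd, List.getD_append_right _ _ _ _ (by rw [List.length_take]; omega),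
      ClaimAux.getD_drop']
    congr 1
    rw [List.length_take]
    omega
  -- extract the created 1111
  obtain ⟨j', hj'occ, hj'lt, hj'gt⟩ := h1111created
  rw [show w1111.length = 4 from rfl] at hj'gt
  have hy4 : ∀ t, t < 4 → y.getD (j' + t) false = true := by
    intro t ht
    rw [ClaimAux.occursAt_getD hj'occ t (by rw [show w1111.length = 4 from rfl]; omega)]
    exact (by decide : ∀ t' : ℕ, t' < 4 → w1111.getD t' false = true) t ht
  have hj'len : j' + 4 ≤ y.length := by
    have := ClaimAux.occursAt_length hj'occ (by simp [w1111])
    rwa [show w1111.length = 4 from rfl] at this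
  have hk1 : 1 ≤ k := by omega
  have hkp1 : k + 1 < x.length := by omega
  have hykm1 : y.getD (k - 1) false = true := by
    have := hy4 (k - 1 - j') (by omega)
    rwa [show j' + (k - 1 - j') = k - 1 by omega] at this
  have hyk : y.getD k false = true := by
    have := hy4 (k - j') (by omega)
    rwa [show j' + (k - j') = k by omega] at this
  have hxkm1 : x.getD (k - 1) false = true := by
    rw [← ygetD_lt (k - 1) (by omega)]; exact hykm1
  have hxkp1 : x.getD (k + 1) false = true := by
    rw [← ygetD_ge k le_rfl]; exact hyk
  -- the first disjunct of h110011 is impossible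
  rcases h110011 with ⟨i, hiocc, hik, hki⟩ | ⟨j, hjocc, hjk, hkj⟩
  · exfalso
    rw [show w110011.length = 6 from rfl] at hki
    obtain ⟨t, ht6, hit⟩ : ∃ t, t < 6 ∧ i + t = k := ⟨k - i, by omega, by omega⟩
    have hxt : w110011.getD t false = false := by
      rw [← ClaimAux.occursAt_getD hiocc t (by rw [show w110011.length = 6 from rfl]; omega),
        hit]
      exact hval
    interval_cases t
    · exact absurd hxt (by decide)
    · exact absurd hxt (by decide)
    · have h4 := ClaimAux.occursAt_getD hiocc 3 (by rw [show w110011.length = 6 from rfl]; omega)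
      rw [show i + 3 = k + 1 by omega, hxkp1] at h4
      exact absurd h4 (by decide)
    · have h4 := ClaimAux.occursAt_getD hiocc 2 (by rw [show w110011.length = 6 from rfl]; omega)
      rw [show i + 2 = k - 1 by omega, hxkm1] at h4
      exact absurd h4 (by decide)
    · exact absurd hxt (by decide)
    · exact absurd hxt (by decide)
  -- now work with the occurrence of 110011 in y
  rw [show w110011.length = 6 from rfl] at hkj
  have hy6 : ∀ t, t < 6 → y.getD (j + t) false = w110011.getD t false := fun t ht =>
    ClaimAux.occursAt_getD hjocc t (by rw [show w110011.length = 6 from rfl]; omega)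
  have hjlen : j + 6 ≤ y.length := by
    have := ClaimAux.occursAt_length hjocc (by simp [w110011])
    rwa [show w110011.length = 6 from rfl] at this
  have hyj2 : y.getD (j + 2) false = false := by
    have := hy6 2 (by omega); rwa [show w110011.getD 2 false = false from rfl] at this
  have hyj3 : y.getD (j + 3) false = false := by
    have := hy6 3 (by omega); rwa [show w110011.getD 3 false = false from rfl] at this
  have hcase : k = j + 1 ∨ k = j + 5 := by
    rcases (by omega : k = j + 1 ∨ k = j + 2 ∨ k = j + 3 ∨ k = j + 4 ∨ k = j + 5) with
      h | h | h | h | h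
    · exact Or.inl h
    · exfalso; rw [h] at hyk; rw [hyk] at hyj2; exact absurd hyj2 (by decide)
    · exfalso; rw [h] at hyk; rw [hyk] at hyj3; exact absurd hyj3 (by decide)
    · exfalso; rw [h, show j + 4 - 1 = j + 3 by omega] at hykm1
      rw [hykm1] at hyj3; exact absurd hyj3 (by decide)
    · exact Or.inr h
  rcases hcase with hA | hB
  -- =============== CASE A : k = j + 1 ===============
  · have hxk2 : x.getD (k + 2) false = false := by
      rw [← ygetD_ge (k + 1) (by omega)]
      have := hyj2
      rwa [show j + 2 = k + 1 by omega] at this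
    have hj'3 : j' = k - 3 ∧ 3 ≤ k := by
      rcases (by omega : j' = k - 1 ∨ (2 ≤ k ∧ j' = k - 2) ∨ (3 ≤ k ∧ j' = k - 3)) with
        h | ⟨h2, h⟩ | ⟨h2, h⟩
      · exfalso
        have := hy4 2 (by omega)
        rw [h, show k - 1 + 2 = j + 2 by omega] at this
        rw [this] at hyj2; exact absurd hyj2 (by decide)
      · exfalso
        have := hy4 3 (by omega)
        rw [h, show k - 2 + 3 = j + 2 by omega] at this
        rw [this] at hyj2; exact absurd hyj2 (by decide)
      · exact ⟨h, h2⟩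
    obtain ⟨hj'eq, hk3⟩ := hj'3
    have hykm2 : y.getD (k - 2) false = true := by
      have := hy4 1 (by omega)
      rwa [hj'eq, show k - 3 + 1 = k - 2 by omega] at this
    have hykm3 : y.getD (k - 3) false = true := by
      have := hy4 0 (by omega)
      rwa [hj'eq, Nat.add_zero] at this
    have hxkm2 : x.getD (k - 2) false = true := by
      rw [← ygetD_lt (k - 2) (by omega)]; exact hykm2
    have hxkm3 : x.getD (k - 3) false = true := by
      rw [← ygetD_lt (k - 3) (by omega)]; exact hykm3
    have hykp2 : y.getD (k + 2) false = false := by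
      have := hyj3; rwa [show j + 3 = k + 2 by omega] at this
    have hk2len : k + 2 < x.length := by omega
    constructor
    · -- Preserved
      refine ⟨{k}, ?_, ?_, hy.symm, ?_, ?_⟩
      · intro k' hk'; rw [Finset.mem_singleton] at hk'; rw [hk']; exact hk
      · rw [Finset.card_singleton]; omega
      · intro i hiocc k' hk' hcontra
        rw [Finset.mem_singleton] at hk'
        rw [hk'] at hcontra
        obtain ⟨hik, hki⟩ := hcontra
        rw [show w11011.length = 5 from rfl] at hki
        obtain ⟨t, ht5, hit⟩ : ∃ t, t < 5 ∧ i + t = k := ⟨k - i, by omega, by omega⟩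
        have hxt : w11011.getD t false = false := by
          rw [← ClaimAux.occursAt_getD hiocc t (by rw [show w11011.length = 5 from rfl]; omega),
            hit]
          exact hval
        interval_cases t
        · exact absurd hxt (by decide)
        · exact absurd hxt (by decide)
        · have h4 := ClaimAux.occursAt_getD hiocc 4
            (by rw [show w11011.length = 5 from rfl]; omega)
          rw [show i + 4 = k + 2 by omega, hxk2] at h4
          exact absurd h4 (by decide)
        · exact absurd hxt (by decide)
        · exact absurd hxt (by decide)
      · intro j0 hj0occ k' hk' hcontra
        rw [Finset.mem_singleton] at hk'
        rw [hk'] at hcontra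
        rw [ClaimAux.junction_singleton] at hcontra
        obtain ⟨hj0k, hkj0⟩ := hcontra
        rw [show w11011.length = 5 from rfl] at hkj0
        have hy5 : ∀ t, t < 5 → y.getD (j0 + t) false = w11011.getD t false := fun t ht =>
          ClaimAux.occursAt_getD hj0occ t (by rw [show w11011.length = 5 from rfl]; omega)
        rcases (by omega : j0 = k - 1 ∨ (2 ≤ k ∧ j0 = k - 2) ∨ (3 ≤ k ∧ j0 = k - 3) ∨
            (4 ≤ k ∧ j0 = k - 4)) with h | ⟨h2, h⟩ | ⟨h2, h⟩ | ⟨h2, h⟩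
        · have := hy5 3 (by omega)
          rw [h, show k - 1 + 3 = k + 2 by omega, hykp2] at this
          exact absurd this (by decide)
        · have := hy5 2 (by omega)
          rw [h, show k - 2 + 2 = k by omega, hyk] at this
          exact absurd this (by decide)
        · have := hy5 2 (by omega)
          rw [h, show k - 3 + 2 = k - 1 by omega, hykm1] at this
          exact absurd this (by decide)
        · have := hy5 2 (by omega)
          rw [h, show k - 4 + 2 = k - 2 by omega, hykm2] at this
          exact absurd this (by decide)
    · -- tau part, case A
      obtain ⟨A, a, hpA, hAend⟩ := ClaimAux.exists_trailing_run (x.take k)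
      have hplen : (x.take k).length = k := by rw [List.length_take]; omega
      have ha2 : 2 ≤ a := by
        refine ClaimAux.trailing_ge_two hpA hAend (by omega) ?_ ?_
        · rw [hplen, ClaimAux.getD_take' x (show k - 1 < k by omega)]; exact hxkm1
        · rw [hplen, ClaimAux.getD_take' x (show k - 2 < k by omega)]; exact hxkm2
      have hB'head : (x.drop (k + 2)) = [] ∨ (x.drop (k + 2)).head? = some false := by
        right
        rw [List.head?_eq_getElem?, List.getElem?_drop]
        have hxk2' : x[k + 2 + 0] = false := by
          have := hxk2
          rw [List.getD_eq_getElem _ _ (show k + 2 < x.length by omega)] at this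
          simpa using this
        rw [List.getElem?_eq_getElem (by omega), hxk2']
      have hxkE : x[k] = false := by
        have := hval; rwa [List.getD_eq_getElem _ _ hk] at this
      have hxkp1E : x[k + 1] = true := by
        have := hxkp1; rwa [List.getD_eq_getElem _ _ (show k + 1 < x.length by omega)] at this
      have hdropk : x.drop k = false :: true :: x.drop (k + 2) := by
        rw [List.drop_eq_getElem_cons hk, hxkE,
          List.drop_eq_getElem_cons (show k + 1 < x.length from by omega), hxkp1E]
      have hdropk1 : x.drop (k + 1) = true :: x.drop (k + 2) := by
        rw [List.drop_eq_getElem_cons (show k + 1 < x.length from by omega), hxkp1E]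
      have hxdec : x = A ++ (List.replicate a true ++ (false :: true :: x.drop (k + 2))) := by
        conv_lhs => rw [← List.take_append_drop k x]
        rw [hpA, hdropk, List.append_assoc]
      have hydec : y = A ++ (List.replicate (a + 1) true ++ x.drop (k + 2)) := by
        rw [hyd, hdropk1, hpA, List.append_assoc]
        congr 1
        rw [List.replicate_succ', List.append_assoc, List.singleton_append]
      have ht1 : tau1 (false :: true :: x.drop (k + 2)) = 1 :: tau1 (x.drop (k + 2)) := by
        rw [ClaimAux.tau1_false_cons]
        have := ClaimAux.tau1_run 1 (x.drop (k + 2)) (by omega) hB'head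
        rwa [List.replicate_one, List.singleton_append] at this
      have htauX : tau1 x = tau1 A ++ a :: (1 :: tau1 (x.drop (k + 2))) := by
        conv_lhs => rw [hxdec]
        rw [ClaimAux.tau1_mid A (false :: true :: x.drop (k + 2)) a (by omega) hAend (Or.inr rfl), ht1]
      have htauY : tau1 y = tau1 A ++ (a + 1) :: tau1 (x.drop (k + 2)) := by
        conv_lhs => rw [hydec]
        rw [ClaimAux.tau1_mid A _ (a + 1) (by omega) hAend hB'head]
      have hGX : tauGe2 x = (tau1 A).filter (fun ℓ => decide (2 ≤ ℓ)) ++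
          a :: (tau1 (x.drop (k + 2))).filter (fun ℓ => decide (2 ≤ ℓ)) := by
        unfold tauGe2
        rw [htauX, List.filter_append]
        congr 1
        rw [List.filter_cons, if_pos (by simpa using ha2), List.filter_cons,
          if_neg (by simp)]
      have hGY : tauGe2 y = (tau1 A).filter (fun ℓ => decide (2 ≤ ℓ)) ++
          (a + 1) :: (tau1 (x.drop (k + 2))).filter (fun ℓ => decide (2 ≤ ℓ)) := by
        unfold tauGe2
        rw [htauY, List.filter_append]
        congr 1
        rw [List.filter_cons, if_pos (by simp; omega)]
      rw [hGX, hGY]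
      exact ClaimAux.hamming_one _ _ a (a + 1) (by omega)
  -- =============== CASE B : k = j + 5 ===============
  · have hxkm2 : x.getD (k - 2) false = false := by
      rw [← ygetD_lt (k - 2) (by omega)]
      have := hyj3
      rwa [show j + 3 = k - 2 by omega] at this
    have hk5 : 5 ≤ k := by omega
    have hj'eq : j' = k - 1 := by
      rcases (by omega : j' = k - 1 ∨ j' = k - 2 ∨ j' = k - 3) with h | h | h
      · exact h
      · exfalso
        have := hy4 0 (by omega)
        rw [h, Nat.add_zero, show k - 2 = j + 3 by omega] at this
        rw [this] at hyj3; exact absurd hyj3 (by decide)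
      · exfalso
        have := hy4 0 (by omega)
        rw [h, Nat.add_zero, show k - 3 = j + 2 by omega] at this
        rw [this] at hyj2; exact absurd hyj2 (by decide)
    have hykp1 : y.getD (k + 1) false = true := by
      have := hy4 2 (by omega)
      rwa [hj'eq, show k - 1 + 2 = k + 1 by omega] at this
    have hxkp2 : x.getD (k + 2) false = true := by
      rw [← ygetD_ge (k + 1) (by omega)]; exact hykp1
    have hklen : k + 4 ≤ x.length := by
      rw [hj'eq] at hj'len; omega
    have hyj2' : y.getD (k - 3) false = false := by
      have := hyj2; rwa [show j + 2 = k - 3 by omega] at this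
    have hyj3' : y.getD (k - 2) false = false := by
      have := hyj3; rwa [show j + 3 = k - 2 by omega] at this
    constructor
    · -- Preserved
      refine ⟨{k}, ?_, ?_, hy.symm, ?_, ?_⟩
      · intro k' hk'; rw [Finset.mem_singleton] at hk'; rw [hk']; exact hk
      · rw [Finset.card_singleton]; omega
      · intro i hiocc k' hk' hcontra
        rw [Finset.mem_singleton] at hk'
        rw [hk'] at hcontra
        obtain ⟨hik, hki⟩ := hcontra
        rw [show w11011.length = 5 from rfl] at hki
        obtain ⟨t, ht5, hit⟩ : ∃ t, t < 5 ∧ i + t = k := ⟨k - i, by omega, by omega⟩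
        have hxt : w11011.getD t false = false := by
          rw [← ClaimAux.occursAt_getD hiocc t (by rw [show w11011.length = 5 from rfl]; omega),
            hit]
          exact hval
        interval_cases t
        · exact absurd hxt (by decide)
        · exact absurd hxt (by decide)
        · have h4 := ClaimAux.occursAt_getD hiocc 0
            (by rw [show w11011.length = 5 from rfl]; omega)
          rw [Nat.add_zero, show i = k - 2 by omega, hxkm2] at h4
          exact absurd h4 (by decide)
        · exact absurd hxt (by decide)
        · exact absurd hxt (by decide)
      · intro j0 hj0occ k' hk' hcontra
        rw [Finset.mem_singleton] at hk'
        rw [hk'] at hcontra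
        rw [ClaimAux.junction_singleton] at hcontra
        obtain ⟨hj0k, hkj0⟩ := hcontra
        rw [show w11011.length = 5 from rfl] at hkj0
        have hy5 : ∀ t, t < 5 → y.getD (j0 + t) false = w11011.getD t false := fun t ht =>
          ClaimAux.occursAt_getD hj0occ t (by rw [show w11011.length = 5 from rfl]; omega)
        rcases (by omega : j0 = k - 1 ∨ j0 = k - 2 ∨ j0 = k - 3 ∨ j0 = k - 4) with
          h | h | h | h
        · have := hy5 2 (by omega)
          rw [h, show k - 1 + 2 = k + 1 by omega, hykp1] at this
          exact absurd this (by decide)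
        · have := hy5 0 (by omega)
          rw [h, Nat.add_zero, hyj3'] at this
          exact absurd this (by decide)
        · have := hy5 0 (by omega)
          rw [h, Nat.add_zero, hyj2'] at this
          exact absurd this (by decide)
        · have := hy5 1 (by omega)
          rw [h, show k - 4 + 1 = k - 3 by omega, hyj2'] at this
          exact absurd this (by decide)
    · -- tau part, case B
      have hAlast : (x.take (k - 1)) = [] ∨ (x.take (k - 1)).getLast? = some false := by
        right
        rw [List.getLast?_eq_getElem?]
        have hlen : (x.take (k - 1)).length = k - 1 := by rw [List.length_take]; omega
        rw [hlen, show k - 1 - 1 = k - 2 by omega,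
          List.getElem?_take_of_lt (show k - 2 < k - 1 by omega)]
        have hxkm2E : x[k - 2] = false := by
          have := hxkm2
          rwa [List.getD_eq_getElem _ _ (show k - 2 < x.length by omega)] at this
        rw [List.getElem?_eq_getElem (show k - 2 < x.length by omega), hxkm2E]
      obtain ⟨c, B', hqB, hB'head, -⟩ := ClaimAux.exists_leading_run (x.drop (k + 1))
      have hc2 : 2 ≤ c := by
        refine ClaimAux.leading_ge_two hqB hB'head ?_ ?_
        · rw [ClaimAux.getD_drop', Nat.add_zero]; exact hxkp1
        · rw [ClaimAux.getD_drop']; exact hxkp2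
      have hxkm1E : x[k - 1] = true := by
        have := hxkm1
        rwa [List.getD_eq_getElem _ _ (show k - 1 < x.length by omega)] at this
      have hxkE : x[k] = false := by
        have := hval; rwa [List.getD_eq_getElem _ _ hk] at this
      have hdropkm1 : x.drop (k - 1) = true :: false :: x.drop (k + 1) := by
        rw [List.drop_eq_getElem_cons (show k - 1 < x.length from by omega), hxkm1E,
          show k - 1 + 1 = k by omega, List.drop_eq_getElem_cons hk, hxkE]
      have hxdec : x = (x.take (k - 1)) ++
          (List.replicate 1 true ++ (false :: x.drop (k + 1))) := by
        conv_lhs => rw [← List.take_append_drop (k - 1) x]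
        rw [hdropkm1, List.replicate_one, List.singleton_append]
      have htake : x.take k = x.take (k - 1) ++ [true] := by
        conv_lhs => rw [show k = (k - 1) + 1 by omega]
        rw [List.take_succ, List.getElem?_eq_getElem (show k - 1 < x.length by omega), hxkm1E]
        rfl
      have hydec : y = x.take (k - 1) ++ (List.replicate (c + 1) true ++ B') := by
        rw [hyd, htake, hqB, List.append_assoc]
        simp [List.replicate_succ]
      have htfc : tau1 (false :: x.drop (k + 1)) = c :: tau1 B' := by
        rw [ClaimAux.tau1_false_cons, hqB, ClaimAux.tau1_run c B' (by omega) hB'head]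
      have htauX : tau1 x = tau1 (x.take (k - 1)) ++ 1 :: (c :: tau1 B') := by
        conv_lhs => rw [hxdec]
        rw [ClaimAux.tau1_mid (x.take (k - 1)) (false :: x.drop (k + 1)) 1 (by omega) hAlast (Or.inr rfl), htfc]
      have htauY : tau1 y = tau1 (x.take (k - 1)) ++ (c + 1) :: tau1 B' := by
        conv_lhs => rw [hydec]
        rw [ClaimAux.tau1_mid _ _ (c + 1) (by omega) hAlast hB'head]
      have hGX : tauGe2 x = (tau1 (x.take (k - 1))).filter (fun ℓ => decide (2 ≤ ℓ)) ++
          c :: (tau1 B').filter (fun ℓ => decide (2 ≤ ℓ)) := by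
        unfold tauGe2
        rw [htauX, List.filter_append]
        congr 1
        rw [List.filter_cons, if_neg (by simp), List.filter_cons, if_pos (by simpa using hc2)]
      have hGY : tauGe2 y = (tau1 (x.take (k - 1))).filter (fun ℓ => decide (2 ≤ ℓ)) ++
          (c + 1) :: (tau1 B').filter (fun ℓ => decide (2 ≤ ℓ)) := by
        unfold tauGe2
        rw [htauY, List.filter_append]
        congr 1
        rw [List.filter_cons, if_pos (by simp; omega)]
      rw [hGX, hGY]
      exact ClaimAux.hamming_one _ _ c (c + 1) (by omega)
end

section
/- Let s be a positive integer and let x and x' be binary strings, all of whose runs have length at most s. Suppose a string y can be obtained from x, and also from x', by deleting a single symbol 0 that constitutes a run of length 1 whose two neighboring runs of ones have lengths 1 and ℓ for some ℓ ≥ 3 (the value of ℓ may differ between x and x'). If τ_{≥2}(x) = τ_{≥2}(x') and Σ_{i odd} τ_1(x)_i ≡ Σ_{i odd} τ_1(x')_i (mod s+1), then τ_1(x) = τ_1(x'). In other words, τ_1(x) is determined by y, τ_{≥2}(x), and the value Σ_{i odd} τ_1(x)_i mod (s+1). -/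
namespace MyClaim4Aux
open List

theorem loop_acc (r : α → α → Bool) : ∀ (l : List α) (a : α) (g : List α) (gs : List (List α)),
    List.splitBy.loop r l a g gs = gs.reverse ++ List.splitBy.loop r l a g [] := by
  intro l
  induction l with
  | nil => intro a g gs; simp [List.splitBy.loop]
  | cons c l ih =>
    intro a g gs
    rw [List.splitBy.loop, List.splitBy.loop]
    cases r a c with
    | true => simp only; rw [ih]
    | false => simp only; rw [ih, ih c [] [(a::g).reverse]]; simp

theorem loop_append (r : α → α → Bool) (b : α) (l₂ : List α) :
    ∀ (l : List α) (a : α) (g : List α), r ((a :: l).getLast (by simp)) b = false →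
    List.splitBy.loop r (l ++ b :: l₂) a g [] =
      List.splitBy.loop r l a g [] ++ List.splitBy.loop r l₂ b [] [] := by
  intro l
  induction l with
  | nil =>
    intro a g h
    simp only [List.getLast_singleton] at h
    rw [List.nil_append, List.splitBy.loop, h]
    simp only
    rw [loop_acc]
    simp [List.splitBy.loop]
  | cons c l ih =>
    intro a g h
    rw [List.getLast_cons (by simp)] at h
    rw [List.cons_append, List.splitBy.loop, List.splitBy.loop]
    cases r a c with
    | true => simp only; exact ih c (a :: g) h
    | false =>
      simp only
      rw [loop_acc r (l ++ b :: l₂) c [] [(a::g).reverse], ih c [] h,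
        loop_acc r l c [] [(a::g).reverse]]
      simp

theorem splitBy_append (r : α → α → Bool) (l₁ l₂ : List α) (a b : α)
    (h₁ : l₁.getLast? = some a) (h₂ : l₂.head? = some b) (hr : r a b = false) :
    (l₁ ++ l₂).splitBy r = l₁.splitBy r ++ l₂.splitBy r := by
  cases l₁ with
  | nil => simp at h₁
  | cons x l =>
    cases l₂ with
    | nil => simp at h₂
    | cons y l' =>
      simp only [List.head?_cons, Option.some.injEq] at h₂
      subst h₂
      rw [List.getLast?_eq_getLast (by simp), Option.some.injEq] at h₁
      rw [List.cons_append, List.splitBy, List.splitBy, List.splitBy]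
      exact loop_append r y l' l x [] (by rw [h₁]; exact hr)

theorem splitBy_replicate_loop (r : α → α → Bool) (a : α) (hr : r a a = true) :
    ∀ (n : ℕ) (g : List α), List.splitBy.loop r (List.replicate n a) a g [] =
      [(a :: g).reverse ++ List.replicate n a] := by
  intro n
  induction n with
  | zero => intro g; simp [List.splitBy.loop]
  | succ n ih =>
    intro g
    rw [List.replicate_succ, List.splitBy.loop, hr]
    simp only
    rw [ih (a :: g)]
    simp [List.replicate_succ]

theorem splitBy_replicate (r : α → α → Bool) (a : α) (hr : r a a = true) (n : ℕ) (hn : 0 < n) :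
    (List.replicate n a).splitBy r = [List.replicate n a] := by
  obtain ⟨m, rfl⟩ := Nat.exists_eq_succ_of_ne_zero hn.ne'
  rw [List.replicate_succ, List.splitBy, splitBy_replicate_loop r a hr]
  simp [List.replicate_succ]

theorem tau1_append (A B : List Bool) (a b : Bool) (h₁ : A.getLast? = some a)
    (h₂ : B.head? = some b) (hab : a ≠ b) :
    tau1 (A ++ B) = tau1 A ++ tau1 B := by
  unfold tau1
  rw [splitBy_append (· == ·) A B a b h₁ h₂ (by simpa using hab), List.filter_append,
    List.map_append]

theorem tau1_replicate_true (n : ℕ) (hn : 0 < n) : tau1 (List.replicate n true) = [n] := by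
  unfold tau1
  rw [splitBy_replicate (· == ·) true (by simp) n hn]
  obtain ⟨m, rfl⟩ := Nat.exists_eq_succ_of_ne_zero hn.ne'
  simp [List.replicate_succ, List.filter_cons]

theorem getLast?_replicate_true (n : ℕ) (hn : 0 < n) :
    (List.replicate n true).getLast? = some true := by
  obtain ⟨m, rfl⟩ := Nat.exists_eq_succ_of_ne_zero hn.ne'
  rw [List.getLast?_eq_getLast (by simp), List.getLast_replicate]

theorem head?_replicate_true (n : ℕ) (hn : 0 < n) :
    (List.replicate n true).head? = some true := by
  obtain ⟨m, rfl⟩ := Nat.exists_eq_succ_of_ne_zero hn.ne'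
  simp [List.replicate_succ]

theorem tau1_concat (A B : List Bool) (n : ℕ) (hn : 0 < n)
    (hA : A = [] ∨ A.getLast? = some false) (hB : B = [] ∨ B.head? = some false) :
    tau1 (A ++ List.replicate n true ++ B) = tau1 A ++ n :: tau1 B := by
  have hmid : tau1 (List.replicate n true) = [n] := tau1_replicate_true n hn
  rcases hA with rfl | hA <;> rcases hB with rfl | hB
  · simpa [show tau1 [] = [] from rfl] using hmid
  · rw [List.nil_append, tau1_append _ B true false (getLast?_replicate_true n hn) hB
      (by simp), hmid]; simp [tau1]
  · rw [List.append_nil, tau1_append A _ false true hA (head?_replicate_true n hn)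
      (by simp), hmid]; simp [tau1]
  · rw [List.append_assoc, tau1_append A _ false true hA
      (by rw [List.head?_append, head?_replicate_true n hn]; rfl) (by simp),
      tau1_append _ B true false (getLast?_replicate_true n hn) hB (by simp), hmid]
    simp [tau1]

theorem map_getD_range (t : List Bool) :
    (List.range t.length).map (fun i => t.getD i false) = t := by
  apply List.ext_getElem (by simp)
  intro i h1 h2
  simp [List.getD_eq_getElem?_getD, List.getElem?_eq_getElem h2]

theorem deleteIdxs_singleton : ∀ (x : List Bool) (k : ℕ), k < x.length →
    deleteIdxs x {k} = x.take k ++ x.drop (k + 1) := by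
  intro x
  induction x with
  | nil => intro k hk; simp at hk
  | cons a t ih =>
    intro k hk
    unfold deleteIdxs
    rw [List.length_cons, List.range_succ_eq_map, List.filter_cons, List.filter_map]
    have hf : ((fun i => (a :: t).getD i false) ∘ Nat.succ) = fun i => t.getD i false := by
      funext i; simp [List.getD_cons_succ]
    cases k with
    | zero =>
      rw [if_neg (by simp)]
      have hp : ((fun i => decide (i ∉ ({0} : Finset ℕ))) ∘ Nat.succ) = fun _ => true := by
        funext i; simp
      rw [hp, List.filter_true, List.map_map, hf, map_getD_range]
      simp
    | succ j =>
      rw [if_pos (by simp), List.map_cons, List.map_map]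
      have hp : ((fun i => decide (i ∉ ({j+1} : Finset ℕ))) ∘ Nat.succ)
          = fun i => decide (i ∉ ({j} : Finset ℕ)) := by
        funext i; simp
      rw [hp, hf]
      have := ih j (by simpa using hk)
      unfold deleteIdxs at this
      rw [this]
      simp

def psum : Bool → List ℕ → ℕ
  | _, [] => 0
  | b, a :: l => (if b then a else 0) + psum (!b) l

def fsum (b : Bool) (l : List ℕ) : ℕ :=
  ((Finset.range l.length).filter (fun i => i % 2 = if b then 0 else 1)).sum
    (fun i => l.getD i 0)

theorem fsum_eq (b : Bool) (l : List ℕ) : fsum b l =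
    ∑ i ∈ Finset.range l.length, if i % 2 = (if b then 0 else 1) then l.getD i 0 else 0 := by
  rw [fsum, Finset.sum_filter]

theorem fsum_cons (b : Bool) (a : ℕ) (l : List ℕ) :
    fsum b (a :: l) = (if b then a else 0) + fsum (!b) l := by
  rw [fsum_eq, fsum_eq, List.length_cons, Finset.sum_range_succ']
  have h1 : ∀ i, (a :: l).getD (i + 1) 0 = l.getD i 0 := fun i => rfl
  have h2 : ∀ i : ℕ, (i + 1) % 2 = (if b then 0 else 1) ↔ i % 2 = (if !b then 0 else 1) := by
    intro i; cases b <;> simp <;> omega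
  have h3 : (∑ i ∈ Finset.range l.length,
        if (i+1) % 2 = (if b then 0 else 1) then (a :: l).getD (i+1) 0 else 0)
      = ∑ i ∈ Finset.range l.length, if i % 2 = (if !b then 0 else 1) then l.getD i 0 else 0 := by
    apply Finset.sum_congr rfl
    intro i _
    rw [h1]
    by_cases h : i % 2 = (if !b then 0 else 1)
    · rw [if_pos ((h2 i).mpr h), if_pos h]
    · rw [if_neg (fun hc => h ((h2 i).mp hc)), if_neg h]
  rw [h3]
  cases b <;> simp [Nat.add_comm]

theorem fsum_eq_psum (b : Bool) : ∀ l, fsum b l = psum b l := by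
  intro l
  induction l generalizing b with
  | nil => simp [fsum, psum]
  | cons a l ih => rw [fsum_cons, psum, ih]

theorem oddIdxSum_eq_psum (l : List ℕ) : oddIdxSum l = psum false l := by
  rw [← fsum_eq_psum]; simp [oddIdxSum, fsum]

theorem psum_append (L : List ℕ) : ∀ (P : List ℕ) (b : Bool),
    psum b (P ++ L) = psum b P + psum (if P.length % 2 = 0 then b else !b) L := by
  intro P
  induction P with
  | nil => intro b; simp [psum]
  | cons p P ih =>
    intro b
    rw [List.cons_append, psum, psum, ih, List.length_cons]
    by_cases h : P.length % 2 = 0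
    · have h2 : ¬ ((P.length + 1) % 2 = 0) := by omega
      simp [h, h2, Nat.add_assoc]
    · have h2 : (P.length + 1) % 2 = 0 := by omega
      simp [h, h2, Nat.add_assoc]

theorem split_unique : ∀ (P P' Q Q' : List ℕ) (m m' : ℕ), 2 ≤ m → 2 ≤ m' →
    P ++ m :: Q = P' ++ m' :: Q' →
    P.filter (fun v => decide (2 ≤ v)) ++ (m-1) :: Q.filter (fun v => decide (2 ≤ v))
      = P'.filter (fun v => decide (2 ≤ v)) ++ (m'-1) :: Q'.filter (fun v => decide (2 ≤ v)) →
    P = P' ∧ m = m' ∧ Q = Q' := by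
  intro P
  induction P with
  | nil =>
    intro P' Q Q' m m' hm hm' h1 h2
    cases P' with
    | nil =>
      simp only [List.nil_append, List.cons.injEq] at h1
      exact ⟨rfl, h1.1, h1.2⟩
    | cons p P₂ =>
      exfalso
      simp only [List.nil_append, List.cons_append, List.cons.injEq] at h1
      obtain ⟨rfl, -⟩ := h1
      rw [List.filter_cons, if_pos (by simpa using hm)] at h2
      simp only [List.filter_nil, List.nil_append, List.cons_append, List.cons.injEq] at h2
      omega
  | cons p P₂ ih =>
    intro P' Q Q' m m' hm hm' h1 h2
    cases P' with
    | nil =>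
      exfalso
      simp only [List.nil_append, List.cons_append, List.cons.injEq] at h1
      obtain ⟨rfl, -⟩ := h1
      rw [List.filter_cons, if_pos (by simpa using hm')] at h2
      simp only [List.filter_nil, List.nil_append, List.cons_append, List.cons.injEq] at h2
      omega
    | cons p' P₂' =>
      simp only [List.cons_append, List.cons.injEq] at h1
      obtain ⟨rfl, h1⟩ := h1
      rw [List.filter_cons, List.filter_cons] at h2
      by_cases hp : 2 ≤ p
      · rw [if_pos (by simpa using hp), if_pos (by simpa using hp)] at h2
        simp only [List.cons_append, List.cons.injEq] at h2
        obtain ⟨P₂eq, meq, Qeq⟩ := ih P₂' Q Q' m m' hm hm' h1 h2.2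
        exact ⟨by rw [P₂eq], meq, Qeq⟩
      · rw [if_neg (by simpa using hp), if_neg (by simpa using hp)] at h2
        obtain ⟨P₂eq, meq, Qeq⟩ := ih P₂' Q Q' m m' hm hm' h1 h2
        exact ⟨by rw [P₂eq], meq, Qeq⟩

theorem getD_eq (x : List Bool) (n : ℕ) (h : n < x.length) : x.getD n false = x[n] := by
  simp [List.getD_eq_getElem?_getD, List.getElem?_eq_getElem h]

theorem take_drop_replicate (x : List Bool) (i ℓ : ℕ) (hle : i + ℓ ≤ x.length)
    (hconst : ∀ j, i ≤ j → j < i + ℓ → x.getD j false = true) :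
    (x.drop i).take ℓ = List.replicate ℓ true := by
  rw [List.eq_replicate_iff]
  constructor
  · rw [List.length_take, List.length_drop]; omega
  · intro b hb
    rw [List.mem_iff_getElem] at hb
    obtain ⟨j, hj, hb⟩ := hb
    rw [List.getElem_take, List.getElem_drop] at hb
    have hjl : j < ℓ := by
      rw [List.length_take, List.length_drop] at hj; omega
    rw [← hb, ← getD_eq x (i + j) (by omega)]
    exact hconst (i + j) (by omega) (by omega)

theorem decomp (x : List Bool) (k ℓ₁ ℓ₂ : ℕ) (hk : k < x.length)
    (hval : x.getD k false = false)
    (hl1 : ℓ₁ ≤ k) (hr1 : runAt x (k - ℓ₁) ℓ₁) (hv1 : x.getD (k - ℓ₁) false = true)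
    (hr2 : runAt x (k + 1) ℓ₂) (hv2 : x.getD (k + 1) false = true) :
    ∃ A B : List Bool,
      (A = [] ∨ A.getLast? = some false) ∧ (B = [] ∨ B.head? = some false) ∧
      A.length = k - ℓ₁ ∧
      x = A ++ List.replicate ℓ₁ true ++ [false] ++ List.replicate ℓ₂ true ++ B := by
  obtain ⟨hpos1, hlen1, hconst1, hleft1, -⟩ := hr1
  obtain ⟨hpos2, hlen2, hconst2, -, hright2⟩ := hr2
  have hik : k - ℓ₁ + ℓ₁ = k := by omega
  refine ⟨x.take (k - ℓ₁), x.drop (k + 1 + ℓ₂), ?_, ?_, ?_, ?_⟩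
  · rcases Nat.eq_zero_or_pos (k - ℓ₁) with h0 | h0
    · left; rw [h0, List.take_zero]
    · right
      have hlt : k - ℓ₁ - 1 < k - ℓ₁ := by omega
      have hlen : (x.take (k - ℓ₁)).length = k - ℓ₁ := by
        rw [List.length_take]; omega
      rw [List.getLast?_eq_getElem?, hlen, List.getElem?_take_of_lt hlt,
        List.getElem?_eq_getElem (by omega)]
      rcases hleft1 with h | h
      · omega
      · rw [ne_eq, hv1, Bool.not_eq_true] at h
        rw [← getD_eq x _ (by omega), h]
  · rcases Nat.lt_or_ge (k + 1 + ℓ₂) x.length with hlt | hge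
    · right
      have h : x.getD (k + 1 + ℓ₂) false = false := by
        rcases hright2 with h | h
        · omega
        · rw [ne_eq, hv2, Bool.not_eq_true] at h; exact h
      rw [List.head?_drop, List.getElem?_eq_getElem hlt, ← getD_eq x _ hlt, h]
    · left; rw [List.drop_eq_nil_iff]; omega
  · rw [List.length_take]; omega
  · have hconst1' : ∀ j, k - ℓ₁ ≤ j → j < (k - ℓ₁) + ℓ₁ → x.getD j false = true := by
      intro j h1 h2; rw [hconst1 j h1 h2, hv1]
    have hconst2' : ∀ j, k + 1 ≤ j → j < (k + 1) + ℓ₂ → x.getD j false = true := by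
      intro j h1 h2; rw [hconst2 j h1 h2, hv2]
    have e1 : (x.drop (k - ℓ₁)).take ℓ₁ = List.replicate ℓ₁ true :=
      take_drop_replicate x _ _ (by omega) hconst1'
    have e2 : (x.drop (k + 1)).take ℓ₂ = List.replicate ℓ₂ true :=
      take_drop_replicate x _ _ (by omega) hconst2'
    conv_lhs => rw [← List.take_append_drop (k - ℓ₁) x]
    conv_lhs => rw [← List.take_append_drop ℓ₁ (x.drop (k - ℓ₁))]
    rw [e1, List.drop_drop, hik, List.drop_eq_getElem_cons hk, ← getD_eq x k hk, hval]
    conv_lhs => rw [← List.take_append_drop ℓ₂ (x.drop (k + 1))]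
    rw [e2, List.drop_drop]
    simp

theorem cancel_helper (n a b u v w : ℕ) (hu : u = a + w) (hv : v = b + w)
    (h : u ≡ v [MOD n]) : a ≡ b [MOD n] := by
  subst hu hv; exact Nat.ModEq.add_right_cancel' w h

theorem swap_contra (s ℓ : ℕ) (hℓ3 : 3 ≤ ℓ) (hℓs : ℓ ≤ s) (P Q : List ℕ)
    (h : oddIdxSum (P ++ 1 :: ℓ :: Q) ≡ oddIdxSum (P ++ ℓ :: 1 :: Q) [MOD s+1]) : False := by
  rw [oddIdxSum_eq_psum, oddIdxSum_eq_psum, psum_append, psum_append] at h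
  have hfin : ℓ ≡ 1 [MOD s+1] ∨ (1:ℕ) ≡ ℓ [MOD s+1] := by
    by_cases hp : P.length % 2 = 0 <;> simp [hp, psum] at h
    · left; exact cancel_helper _ ℓ 1 _ _ (psum false P + psum false Q) (by omega) (by omega) h
    · right; exact cancel_helper _ 1 ℓ _ _ (psum false P + psum true Q) (by omega) (by omega) h
  have : ℓ % (s+1) = 1 % (s+1) := by
    rcases hfin with h | h
    · exact h
    · exact h.symm
  rw [Nat.mod_eq_of_lt (by omega), Nat.mod_eq_of_lt (by omega)] at this
  omega


theorem tau1_false_concat (B : List Bool) (n : ℕ) (hn : 0 < n)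
    (hB : B = [] ∨ B.head? = some false) :
    tau1 (false :: (List.replicate n true ++ B)) = n :: tau1 B := by
  have h := tau1_concat [false] B n hn (Or.inr (by simp)) hB
  rw [show ([false] : List Bool) ++ List.replicate n true ++ B
      = false :: (List.replicate n true ++ B) from by simp] at h
  rw [h]
  have : tau1 [false] = [] := by simp [tau1, List.splitBy, List.splitBy.loop]
  rw [this, List.nil_append]

end MyClaim4Aux

/-- Claim 4: `τ₁(x)` is determined by `y`, `τ≥2(x)` and `Σ_{i odd} τ₁(x)_i mod (s+1)`,
when `y` results from deleting a `0` forming a run of length 1 adjacent to runs of ones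
of lengths `1` and `ℓ ≥ 3`, and all runs have length at most `s`. -/
theorem tau1_determined (s : ℕ) (hs : 0 < s) (x x' y : List Bool)
    (hxs : ∀ i ℓ, runAt x i ℓ → ℓ ≤ s) (hx's : ∀ i ℓ, runAt x' i ℓ → ℓ ≤ s)
    (k : ℕ) (hk : k < x.length)
    (hval : x.getD k false = false) (hrun : runAt x k 1)
    (hnb : ∃ ℓ ℓ₁ ℓ₂, 3 ≤ ℓ ∧ ℓ₁ ≤ k ∧
      runAt x (k - ℓ₁) ℓ₁ ∧ x.getD (k - ℓ₁) false = true ∧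
      runAt x (k + 1) ℓ₂ ∧ x.getD (k + 1) false = true ∧
      ((ℓ₁ = 1 ∧ ℓ₂ = ℓ) ∨ (ℓ₁ = ℓ ∧ ℓ₂ = 1)))
    (hy : y = deleteIdxs x ({k} : Finset ℕ))
    (k' : ℕ) (hk' : k' < x'.length)
    (hval' : x'.getD k' false = false) (hrun' : runAt x' k' 1)
    (hnb' : ∃ ℓ ℓ₁ ℓ₂, 3 ≤ ℓ ∧ ℓ₁ ≤ k' ∧
      runAt x' (k' - ℓ₁) ℓ₁ ∧ x'.getD (k' - ℓ₁) false = true ∧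
      runAt x' (k' + 1) ℓ₂ ∧ x'.getD (k' + 1) false = true ∧
      ((ℓ₁ = 1 ∧ ℓ₂ = ℓ) ∨ (ℓ₁ = ℓ ∧ ℓ₂ = 1)))
    (hy' : y = deleteIdxs x' ({k'} : Finset ℕ))
    (htau : tauGe2 x = tauGe2 x')
    (hsum : oddIdxSum (tau1 x) ≡ oddIdxSum (tau1 x') [MOD s + 1]) :
    tau1 x = tau1 x' := by
  obtain ⟨ℓ, ℓ₁, ℓ₂, hℓ3, hℓ₁k, hrA, hvA, hrB, hvB, hor⟩ := hnb
  obtain ⟨ℓ', ℓ₁', ℓ₂', hℓ3', hℓ₁k', hrA', hvA', hrB', hvB', hor'⟩ := hnb'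
  obtain ⟨A, B, hAl, hBh, hAlen, hxeq⟩ :=
    MyClaim4Aux.decomp x k ℓ₁ ℓ₂ hk hval hℓ₁k hrA hvA hrB hvB
  obtain ⟨A', B', hAl', hBh', hAlen', hxeq'⟩ :=
    MyClaim4Aux.decomp x' k' ℓ₁' ℓ₂' hk' hval' hℓ₁k' hrA' hvA' hrB' hvB'
  have hℓ₁pos : 0 < ℓ₁ := hrA.1
  have hℓ₂pos : 0 < ℓ₂ := hrB.1
  have hℓ₁pos' : 0 < ℓ₁' := hrA'.1
  have hℓ₂pos' : 0 < ℓ₂' := hrB'.1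
  have hm : ℓ₁ + ℓ₂ = ℓ + 1 := by rcases hor with ⟨h1, h2⟩ | ⟨h1, h2⟩ <;> omega
  have hm' : ℓ₁' + ℓ₂' = ℓ' + 1 := by rcases hor' with ⟨h1, h2⟩ | ⟨h1, h2⟩ <;> omega
  have hℓs : ℓ ≤ s := by
    rcases hor with ⟨h1, h2⟩ | ⟨h1, h2⟩
    · have := hxs (k+1) ℓ₂ hrB; omega
    · have := hxs (k-ℓ₁) ℓ₁ hrA; omega
  have hx1 : tau1 x = tau1 A ++ ℓ₁ :: ℓ₂ :: tau1 B := by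
    rw [hxeq, show A ++ List.replicate ℓ₁ true ++ [false] ++ List.replicate ℓ₂ true ++ B
        = A ++ List.replicate ℓ₁ true ++ (false :: (List.replicate ℓ₂ true ++ B)) from by
      simp [List.append_assoc]]
    rw [MyClaim4Aux.tau1_concat A (false :: (List.replicate ℓ₂ true ++ B)) ℓ₁ hℓ₁pos hAl (Or.inr rfl)]
    rw [MyClaim4Aux.tau1_false_concat B ℓ₂ hℓ₂pos hBh]
  have hx1' : tau1 x' = tau1 A' ++ ℓ₁' :: ℓ₂' :: tau1 B' := by
    rw [hxeq', show A' ++ List.replicate ℓ₁' true ++ [false] ++ List.replicate ℓ₂' true ++ B'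
        = A' ++ List.replicate ℓ₁' true ++ (false :: (List.replicate ℓ₂' true ++ B')) from by
      simp [List.append_assoc]]
    rw [MyClaim4Aux.tau1_concat A' (false :: (List.replicate ℓ₂' true ++ B')) ℓ₁' hℓ₁pos' hAl' (Or.inr rfl)]
    rw [MyClaim4Aux.tau1_false_concat B' ℓ₂' hℓ₂pos' hBh']
  have hyx : y = A ++ List.replicate (ℓ₁ + ℓ₂) true ++ B := by
    rw [hy, MyClaim4Aux.deleteIdxs_singleton x k hk, hxeq]
    have hk1 : (A ++ List.replicate ℓ₁ true).length = k := by
      simp only [List.length_append, List.length_replicate, hAlen]; omega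
    have hk2 : (A ++ List.replicate ℓ₁ true ++ [false]).length = k + 1 := by
      simp only [List.length_append, List.length_replicate, List.length_cons,
        List.length_nil, hAlen]; omega
    rw [show A ++ List.replicate ℓ₁ true ++ [false] ++ List.replicate ℓ₂ true ++ B
        = (A ++ List.replicate ℓ₁ true) ++ ([false] ++ List.replicate ℓ₂ true ++ B) from by
      simp [List.append_assoc]]
    rw [List.take_left' hk1]
    rw [show (A ++ List.replicate ℓ₁ true) ++ ([false] ++ List.replicate ℓ₂ true ++ B)
        = (A ++ List.replicate ℓ₁ true ++ [false]) ++ (List.replicate ℓ₂ true ++ B) from by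
      simp [List.append_assoc]]
    rw [List.drop_left' hk2, List.replicate_add]
    simp only [List.append_assoc]
  have hyx' : y = A' ++ List.replicate (ℓ₁' + ℓ₂') true ++ B' := by
    rw [hy', MyClaim4Aux.deleteIdxs_singleton x' k' hk', hxeq']
    have hk1 : (A' ++ List.replicate ℓ₁' true).length = k' := by
      simp only [List.length_append, List.length_replicate, hAlen']; omega
    have hk2 : (A' ++ List.replicate ℓ₁' true ++ [false]).length = k' + 1 := by
      simp only [List.length_append, List.length_replicate, List.length_cons,
        List.length_nil, hAlen']; omega
    rw [show A' ++ List.replicate ℓ₁' true ++ [false] ++ List.replicate ℓ₂' true ++ B'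
        = (A' ++ List.replicate ℓ₁' true) ++ ([false] ++ List.replicate ℓ₂' true ++ B') from by
      simp [List.append_assoc]]
    rw [List.take_left' hk1]
    rw [show (A' ++ List.replicate ℓ₁' true) ++ ([false] ++ List.replicate ℓ₂' true ++ B')
        = (A' ++ List.replicate ℓ₁' true ++ [false]) ++ (List.replicate ℓ₂' true ++ B') from by
      simp [List.append_assoc]]
    rw [List.drop_left' hk2, List.replicate_add]
    simp only [List.append_assoc]
  have hy1 : tau1 y = tau1 A ++ (ℓ₁ + ℓ₂) :: tau1 B := by
    rw [hyx]; exact MyClaim4Aux.tau1_concat A B (ℓ₁ + ℓ₂) (by omega) hAl hBh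
  have hy1' : tau1 y = tau1 A' ++ (ℓ₁' + ℓ₂') :: tau1 B' := by
    rw [hyx']; exact MyClaim4Aux.tau1_concat A' B' (ℓ₁' + ℓ₂') (by omega) hAl' hBh'
  have h1 : tau1 A ++ (ℓ + 1) :: tau1 B = tau1 A' ++ (ℓ' + 1) :: tau1 B' := by
    rw [← hm, ← hm', ← hy1, ← hy1']
  have hgx : tauGe2 x = (tau1 A).filter (fun v => decide (2 ≤ v)) ++ (ℓ + 1 - 1) ::
      (tau1 B).filter (fun v => decide (2 ≤ v)) := by
    unfold tauGe2
    rw [hx1, List.filter_append]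
    rcases hor with ⟨e1, e2⟩ | ⟨e1, e2⟩ <;> rw [e1, e2] <;> simp only [List.filter_cons]
    · rw [if_neg (by decide), if_pos (decide_eq_true (by omega : 2 ≤ ℓ))]
      simp
    · rw [if_pos (decide_eq_true (by omega : 2 ≤ ℓ)), if_neg (by decide)]
      simp
  have hgx' : tauGe2 x' = (tau1 A').filter (fun v => decide (2 ≤ v)) ++ (ℓ' + 1 - 1) ::
      (tau1 B').filter (fun v => decide (2 ≤ v)) := by
    unfold tauGe2
    rw [hx1', List.filter_append]
    rcases hor' with ⟨e1, e2⟩ | ⟨e1, e2⟩ <;> rw [e1, e2] <;> simp only [List.filter_cons]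
    · rw [if_neg (by decide), if_pos (decide_eq_true (by omega : 2 ≤ ℓ'))]
      simp
    · rw [if_pos (decide_eq_true (by omega : 2 ≤ ℓ')), if_neg (by decide)]
      simp
  have h2 : (tau1 A).filter (fun v => decide (2 ≤ v)) ++ (ℓ + 1 - 1) ::
        (tau1 B).filter (fun v => decide (2 ≤ v))
      = (tau1 A').filter (fun v => decide (2 ≤ v)) ++ (ℓ' + 1 - 1) ::
        (tau1 B').filter (fun v => decide (2 ≤ v)) := by
    rw [← hgx, ← hgx']; exact htau
  obtain ⟨hPA, hmeq, hQB⟩ := MyClaim4Aux.split_unique (tau1 A) (tau1 A') (tau1 B) (tau1 B')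
    (ℓ + 1) (ℓ' + 1) (by omega) (by omega) h1 h2
  have hℓℓ : ℓ = ℓ' := by omega
  subst hℓℓ
  rw [hx1, hx1', ← hPA, ← hQB] at hsum ⊢
  rcases hor with ⟨e1, e2⟩ | ⟨e1, e2⟩ <;> rcases hor' with ⟨f1, f2⟩ | ⟨f1, f2⟩ <;>
    rw [e1, e2, f1, f2] at hsum ⊢
  · exact absurd hsum (fun hc =>
      MyClaim4Aux.swap_contra s ℓ hℓ3 hℓs (tau1 A) (tau1 B) hc)
  · exact absurd hsum (fun hc =>
      MyClaim4Aux.swap_contra s ℓ hℓ3 hℓs (tau1 A) (tau1 B) hc.symm)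
end

section
/- Let ℓ be a positive integer and let c be a real number satisfying c · 2^{−ℓ−2} / (ℓ ln 2) > 1. Then lim_{n→∞} [1 − exp(−(c log₂ n) · 2^{−ℓ−2}/ℓ)]^{2n/(c log₂ n)} = 1. In particular, for every ℓ ≤ 6 this holds for any c ≥ 1065, and consequently for s = c log₂ n one has (A_{s/2,v})^{n/(s/2)} → 1 for every binary string v of length at most 6. -/
/-- Lemma 8: if `c 2^{-ℓ-2}/(ℓ ln 2) > 1` then
`(1 - exp(-(c log₂ n) 2^{-ℓ-2}/ℓ))^{2n/(c log₂ n)} → 1`; in particular the hypothesis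
holds for every `ℓ ≤ 6` and every `c ≥ 1065`. -/
theorem limit_one :
    (∀ ℓ : ℕ, 0 < ℓ → ∀ c : ℝ,
      1 < c * (1 / 2 ^ (ℓ + 2)) / (ℓ * Real.log 2) →
      Filter.Tendsto (fun n : ℕ =>
          (1 - Real.exp (-(c * Real.logb 2 n * (1 / 2 ^ (ℓ + 2)) / ℓ))) ^
            (2 * (n : ℝ) / (c * Real.logb 2 n)))
        Filter.atTop (nhds 1)) ∧
    (∀ ℓ : ℕ, 0 < ℓ → ℓ ≤ 6 → ∀ c : ℝ, 1065 ≤ c →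
      1 < c * (1 / 2 ^ (ℓ + 2)) / (ℓ * Real.log 2)) := by
  constructor
  · intro ℓ hℓ c hc
    set β := c * (1 / 2 ^ (ℓ + 2)) / (ℓ * Real.log 2) with hβ
    have hℓ' : (0:ℝ) < ℓ := Nat.cast_pos.mpr hℓ
    have hlog2 : (0:ℝ) < Real.log 2 := Real.log_pos (by norm_num)
    have hc0 : 0 < c := by
      by_contra h
      push_neg at h
      have : β ≤ 0 := div_nonpos_of_nonpos_of_nonneg
        (mul_nonpos_of_nonpos_of_nonneg h (by positivity)) (by positivity)
      linarith
    have hβ1 : 1 < β := hc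
    have hid : ∀ n : ℕ, c * Real.logb 2 n * (1 / 2 ^ (ℓ + 2)) / ℓ = β * Real.log n := by
      intro n
      rw [hβ, Real.logb]
      field_simp
    set t : ℕ → ℝ := fun n => Real.exp (-(β * Real.log n)) with ht
    set y : ℕ → ℝ := fun n => 2 * (n : ℝ) / (c * Real.logb 2 n) with hy
    -- t → 0
    have htend_log : Filter.Tendsto (fun n : ℕ => β * Real.log n) Filter.atTop Filter.atTop := by
      exact (Filter.Tendsto.const_mul_atTop (by linarith) (Real.tendsto_log_atTop.comp tendsto_natCast_atTop_atTop))
    have ht0 : Filter.Tendsto t Filter.atTop (nhds 0) := by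
      have := Real.tendsto_exp_atBot.comp (Filter.tendsto_neg_atTop_atBot.comp htend_log)
      simpa [ht, Function.comp_def] using this
    -- G → 0
    set G : ℕ → ℝ := fun n => (4 / c) * ((n : ℝ) ^ (1 - β)) * (Real.logb 2 n)⁻¹ with hG
    have hG0 : Filter.Tendsto G Filter.atTop (nhds 0) := by
      have h1 : Filter.Tendsto (fun n : ℕ => (n : ℝ) ^ (1 - β)) Filter.atTop (nhds 0) :=
        by
          have := (tendsto_rpow_neg_atTop (y := β - 1) (by linarith)).comp
            (tendsto_natCast_atTop_atTop (R := ℝ))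
          simpa [Function.comp_def, neg_sub] using this
      have h2 : Filter.Tendsto (fun n : ℕ => (Real.logb 2 n)⁻¹) Filter.atTop (nhds 0) := by
        exact ((Real.tendsto_logb_atTop (by norm_num)).comp tendsto_natCast_atTop_atTop).inv_tendsto_atTop
      have := ((tendsto_const_nhds (x := (4/c)) (f := Filter.atTop (α := ℕ))).mul h1).mul h2
      simpa using this
    -- g = 2 y t, g → 0 via eq with G eventually
    set g : ℕ → ℝ := fun n => 2 * y n * t n with hg
    have hgG : g =ᶠ[Filter.atTop] G := by
      filter_upwards [Filter.eventually_ge_atTop 2] with n hn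
      have hn1 : (1:ℝ) < n := by exact_mod_cast Nat.lt_of_lt_of_le one_lt_two hn
      have hn0 : (0:ℝ) < n := by linarith
      have htn : t n = (n : ℝ) ^ (-β) := by
        rw [ht, Real.rpow_def_of_pos hn0]; ring_nf
      have hnn : (n:ℝ) * (n:ℝ) ^ (-β) = (n:ℝ) ^ (1 - β) := by
        have h1 : (n:ℝ) * (n:ℝ) ^ (-β) = (n:ℝ) ^ (1:ℝ) * (n:ℝ) ^ (-β) := by
          rw [Real.rpow_one]
        rw [h1, ← Real.rpow_add hn0]
        ring_nf
      have hlb : 0 < Real.logb 2 n := Real.logb_pos (by norm_num) hn1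
      show 2 * y n * t n = 4 / c * (n:ℝ) ^ (1 - β) * (Real.logb 2 n)⁻¹
      rw [htn, ← hnn, hy]
      field_simp
      ring
    have hg0 : Filter.Tendsto g Filter.atTop (nhds 0) := hG0.congr' hgG.symm
    -- squeeze
    have hlow : Filter.Tendsto (fun n => 1 - g n) Filter.atTop (nhds 1) := by
      simpa using (tendsto_const_nhds (x := (1:ℝ)) (f := Filter.atTop (α := ℕ))).sub hg0
    apply tendsto_of_tendsto_of_tendsto_of_le_of_le' hlow tendsto_const_nhds
    · -- lower bound eventually
      filter_upwards [Filter.eventually_ge_atTop 2, ht0.eventually (gt_mem_nhds (by norm_num : (0:ℝ) < 1/2))]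
        with n hn htn2
      have hn1 : (1:ℝ) < n := by exact_mod_cast Nat.lt_of_lt_of_le one_lt_two hn
      have htpos : 0 < t n := Real.exp_pos _
      have hbase : 0 < 1 - t n := by linarith
      have hlb : 0 < Real.logb 2 n := Real.logb_pos (by norm_num) hn1
      have hypos : 0 < y n := by
        rw [hy]
        positivity
      have hlog : -(2 * t n) ≤ Real.log (1 - t n) := by
        have hx : (0:ℝ) < (1 - t n)⁻¹ := by positivity
        have h := Real.log_le_sub_one_of_pos hx
        rw [Real.log_inv] at h
        have h2 : (1 - t n)⁻¹ ≤ 1 + 2 * t n := by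
          rw [inv_le_iff_one_le_mul₀ hbase]
          nlinarith [htpos.le]
        nlinarith
      have key : (1 - t n) ^ (y n) = Real.exp (y n * Real.log (1 - t n)) := by
        rw [Real.rpow_def_of_pos hbase, mul_comm]
      have : 1 + y n * Real.log (1 - t n) ≤ (1 - t n) ^ (y n) := by
        rw [key]
        have := Real.add_one_le_exp (y n * Real.log (1 - t n))
        linarith
      have hstep : -(g n) ≤ y n * Real.log (1 - t n) := by
        have h1 := mul_le_mul_of_nonneg_left hlog hypos.le
        have hgn : g n = 2 * y n * t n := rfl
        nlinarith
      calc 1 - g n ≤ 1 + y n * Real.log (1 - t n) := by linarith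
        _ ≤ (1 - t n) ^ (y n) := this
        _ = (1 - Real.exp (-(c * Real.logb 2 n * (1 / 2 ^ (ℓ + 2)) / ℓ))) ^
              (2 * (n : ℝ) / (c * Real.logb 2 n)) := by rw [hid n]
    · -- upper bound eventually
      filter_upwards [Filter.eventually_ge_atTop 2] with n hn
      have hn1 : (1:ℝ) < n := by exact_mod_cast Nat.lt_of_lt_of_le one_lt_two hn
      have htpos : 0 < t n := Real.exp_pos _
      have hlb : 0 < Real.logb 2 n := Real.logb_pos (by norm_num) hn1
      rw [hid n]
      apply Real.rpow_le_one
      · have : t n ≤ 1 := by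
          rw [ht]
          exact Real.exp_le_one_iff.mpr (by
            have : 0 ≤ Real.log n := Real.log_nonneg (by linarith)
            nlinarith)
        linarith
      · linarith [htpos]
      · positivity
  · intro ℓ hℓ hℓ6 c hc
    have h2 : Real.log 2 < 0.6931471808 := Real.log_two_lt_d9
    have h2p : 0 < Real.log 2 := Real.log_pos (by norm_num)
    have hℓ' : (0:ℝ) < ℓ := Nat.cast_pos.mpr hℓ
    have hℓ6' : (ℓ:ℝ) ≤ 6 := by exact_mod_cast hℓ6
    have hpp : (0:ℝ) < 2 ^ (ℓ + 2) := by positivity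
    have hp : (2:ℝ) ^ (ℓ + 2) ≤ 256 := by
      calc (2:ℝ) ^ (ℓ + 2) ≤ 2 ^ 8 := pow_le_pow_right₀ one_le_two (by omega)
        _ = 256 := by norm_num
    rw [lt_div_iff₀ (by positivity)]
    have hcp : (1065:ℝ) / 256 ≤ c * (1 / 2 ^ (ℓ + 2)) := by
      rw [mul_one_div]
      exact div_le_div₀ (by linarith) hc hpp hp
    nlinarith [mul_le_mul hℓ6' h2.le h2p.le (by norm_num : (0:ℝ) ≤ 6)]
end

section
/- For each integer n ≥ 2 let s_n = ⌈1065 · log₂ n⌉. Then the proportion of binary strings x ∈ {0,1}^n with the property that every window of ⌈s_n/2⌉ consecutive symbols of x contains each of the strings 0000, 1111, 11011, and 110011 as a contiguous substring tends to 1 as n → ∞. (Consequently, in any such x there are at most s_n symbols between consecutive occurrences of each of these four strings, every run of x has length at most s_n, and the constrained set C_{T2}(n, s_n) satisfies log₂|C_{T2}(n, s_n)| ≥ n − O(1).) -/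
noncomputable def sN (n : ℕ) : ℕ := ⌈(1065 : ℝ) * Real.logb 2 n⌉₊

noncomputable def winLen (n : ℕ) : ℕ := (sN n + 1) / 2


open Finset in

lemma card_pattern_bad {n m i : ℕ} (w : List Bool)
    (hw : ∃ b : Fin 6 → Bool, w <+: List.ofFn b) (him : i + m ≤ n) :
    (Finset.univ.filter (fun x : Fin n → Bool =>
        ¬ w <:+: (((List.ofFn x).drop i).take m))).card
      ≤ 63 ^ (m / 6) * 2 ^ (n - 6 * (m / 6)) := by
  classical
  set T := m / 6 with hT
  have h6T : 6 * T ≤ m := by rw [hT]; exact Nat.mul_div_le m 6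
  -- block positions
  have hpos : ∀ p : Fin T × Fin 6, i + 6 * p.1.val + p.2.val < n := by
    rintro ⟨t, k⟩
    have ht := t.isLt
    have hk := k.isLt
    simp only at ht hk ⊢
    omega
  set pos : Fin T × Fin 6 → Fin n := fun p => ⟨i + 6 * p.1.val + p.2.val, hpos p⟩ with hposdef
  have posinj : Function.Injective pos := by
    rintro ⟨t, k⟩ ⟨t', k'⟩ h
    have : i + 6 * t.val + k.val = i + 6 * t'.val + k'.val := congrArg Fin.val h
    have ht := t.isLt; have hk := k.isLt; have ht' := t'.isLt; have hk' := k'.isLt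
    have : t.val = t'.val ∧ k.val = k'.val := by omega
    ext <;> simp [this.1, this.2]
  set S : Finset (Fin n) := Finset.univ.image pos with hS
  have hScard : S.card = 6 * T := by
    rw [hS, Finset.card_image_of_injective _ posinj, Finset.card_univ]
    simp [mul_comm]
  -- the bad block set
  set Bad : Finset (Fin 6 → Bool) := Finset.univ.filter (fun b => ¬ w <+: List.ofFn b) with hBad
  have hBadcard : Bad.card ≤ 63 := by
    obtain ⟨b, hb⟩ := hw
    have : Bad ⊂ Finset.univ := by
      rw [Finset.ssubset_univ_iff]
      intro h
      have : b ∈ Bad := h ▸ Finset.mem_univ b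
      rw [hBad, Finset.mem_filter] at this
      exact this.2 hb
    have := Finset.card_lt_card this
    have hcu : (Finset.univ : Finset (Fin 6 → Bool)).card = 64 := by
      simp [Finset.card_univ]
    omega
  -- target sets
  set A : Finset (Fin T → Fin 6 → Bool) := Fintype.piFinset (fun _ => Bad) with hA
  set C : Finset (Fin n → Bool) :=
    Fintype.piFinset (fun j => if j ∈ S then ({false} : Finset Bool) else Finset.univ) with hC
  have hAcard : A.card = Bad.card ^ T := by
    rw [hA, Fintype.card_piFinset]
    simp
  have hCcard : C.card = 2 ^ (n - 6 * T) := by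
    rw [hC, Fintype.card_piFinset]
    have : ∀ j : Fin n, #(if j ∈ S then ({false}:Finset Bool) else univ) = if j ∈ S then 1 else 2 := by
      intro j; split <;> simp
    rw [Finset.prod_congr rfl (fun j _ => this j), Finset.prod_ite, Finset.prod_const,
      Finset.prod_const, one_pow, one_mul]
    have h1 : (univ.filter (fun j : Fin n => j ∉ S)) = Sᶜ := by
      ext j; simp
    rw [h1, Finset.card_compl, hScard]
    simp
  set Φ : (Fin n → Bool) → (Fin T → Fin 6 → Bool) × (Fin n → Bool) :=
    fun x => (fun t k => x (pos (t, k)), fun j => if j ∈ S then false else x j) with hΦ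
  have hinj : Function.Injective Φ := by
    intro x x' h
    funext j
    by_cases hj : j ∈ S
    · rw [hS, Finset.mem_image] at hj
      obtain ⟨⟨t, k⟩, -, hp⟩ := hj
      have := congrFun (congrFun (congrArg Prod.fst h) t) k
      rw [← hp]
      exact this
    · have := congrFun (congrArg Prod.snd h) j
      simpa [hΦ, hj] using this
  have himage : ∀ x ∈ (Finset.univ.filter (fun x : Fin n → Bool =>
      ¬ w <:+: (((List.ofFn x).drop i).take m))), Φ x ∈ A ×ˢ C := by
    intro x hx
    rw [Finset.mem_filter] at hx
    rw [Finset.mem_product]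
    constructor
    · rw [hA, Fintype.mem_piFinset]
      intro t
      rw [hBad, Finset.mem_filter]
      refine ⟨Finset.mem_univ _, fun hpre => hx.2 ?_⟩
      have hblock : List.ofFn (fun k : Fin 6 => x (pos (t, k)))
          = ((((List.ofFn x).drop i).take m).drop (6 * t.val)).take 6 := by
        have ht := t.isLt
        apply List.ext_getElem
        · simp
          omega
        · intro j h1 h2
          simp only [List.getElem_ofFn, List.getElem_take, List.getElem_drop]
          rw [hposdef]
          congr 1
          apply Fin.ext
          simp
          omega
      rw [hblock] at hpre
      have h1 : w <+: (((List.ofFn x).drop i).take m).drop (6 * t.val) :=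
        hpre.trans (List.take_prefix 6 _)
      exact h1.isInfix.trans (List.drop_suffix _ _).isInfix
    · rw [hC, Fintype.mem_piFinset]
      intro j
      by_cases hj : j ∈ S <;> simp [hΦ, hj]
  calc (Finset.univ.filter (fun x : Fin n → Bool =>
        ¬ w <:+: (((List.ofFn x).drop i).take m))).card
      ≤ (A ×ˢ C).card := Finset.card_le_card_of_injOn Φ himage hinj.injOn
    _ = A.card * C.card := Finset.card_product A C
    _ ≤ 63 ^ T * 2 ^ (n - 6 * T) := by
        rw [hAcard, hCcard]
        exact Nat.mul_le_mul_right _ (Nat.pow_le_pow_left hBadcard T)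

lemma loga (n : ℕ) (hn : 1 ≤ n) : 1065 * Nat.log 2 n ≤ sN n := by
  set L := Nat.log 2 n with hL
  have h2L : (2:ℕ)^L ≤ n := Nat.pow_log_le_self 2 (by omega)
  have hlog : (L : ℝ) ≤ Real.logb 2 n := by
    have h1 : Real.logb 2 ((2:ℝ)^L) ≤ Real.logb 2 n := by
      apply Real.logb_le_logb_of_le (by norm_num) (by positivity)
      exact_mod_cast h2L
    rwa [Real.logb_pow, Real.logb_self_eq_one, mul_one] at h1 <;> norm_num
  have : ((1065 * L : ℕ) : ℝ) ≤ (1065 : ℝ) * Real.logb 2 n := by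
    push_cast
    nlinarith
  have h2 := this.trans (Nat.le_ceil _)
  exact_mod_cast h2

lemma T_ge (n : ℕ) (hn : 1 ≤ n) : 88 * Nat.log 2 n ≤ winLen n / 6 := by
  have h := loga n hn
  have h2 : winLen n = (sN n + 1) / 2 := rfl
  omega

lemma hr1 : 2 * ((63:ℝ)/64)^88 < 1 := by
  rw [div_pow, ← mul_div_assoc, div_lt_one (by positivity)]
  norm_num

lemma hlogtendsto : Filter.Tendsto (fun n => Nat.log 2 n) Filter.atTop Filter.atTop := by
  rw [Filter.tendsto_atTop_atTop]
  intro b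
  exact ⟨2^b, fun a ha => by
    calc b = Nat.log 2 (2^b) := (Nat.log_pow (by norm_num) b).symm
    _ ≤ Nat.log 2 a := Nat.log_mono_right ha⟩

lemma g_tendsto : Filter.Tendsto (fun n : ℕ => 4*((n:ℝ)+1) * ((63:ℝ)/64)^(winLen n / 6))
    Filter.atTop (nhds 0) := by
  have h8 : Filter.Tendsto (fun n : ℕ => 8 * (2 * ((63:ℝ)/64)^88)^(Nat.log 2 n))
      Filter.atTop (nhds 0) := by
    have := (tendsto_pow_atTop_nhds_zero_of_lt_one (by positivity) hr1).comp hlogtendsto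
    simpa using this.const_mul 8
  apply squeeze_zero' ?_ ?_ h8
  · filter_upwards with n
    positivity
  · filter_upwards [Filter.eventually_ge_atTop 1] with n hn
    set L := Nat.log 2 n with hLdef
    have hT := T_ge n hn
    have hq01 : (0:ℝ) ≤ (63:ℝ)/64 := by norm_num
    have hq1 : ((63:ℝ)/64) ≤ 1 := by norm_num
    calc 4*((n:ℝ)+1) * ((63:ℝ)/64)^(winLen n / 6)
        ≤ 4*((n:ℝ)+1) * ((63:ℝ)/64)^(88 * L) := by
          apply mul_le_mul_of_nonneg_left (pow_le_pow_of_le_one hq01 hq1 hT) (by positivity)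
      _ ≤ 4*((2:ℝ)^(L+1)) * ((63:ℝ)/64)^(88 * L) := by
          apply mul_le_mul_of_nonneg_right ?_ (by positivity)
          have : n < 2^(L+1) := Nat.lt_pow_succ_log_self (by norm_num) n
          have : (n:ℝ) + 1 ≤ (2:ℝ)^(L+1) := by exact_mod_cast Nat.succ_le_of_lt this
          linarith
      _ = 8 * (2 * ((63:ℝ)/64)^88)^L := by
          rw [pow_mul, mul_pow, pow_succ]
          ring

def GoodPred (n : ℕ) (x : Fin n → Bool) : Prop :=
  ∀ i, i + winLen n ≤ n →
    (w0000 <:+: ((List.ofFn x).drop i).take (winLen n)) ∧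
    (w1111 <:+: ((List.ofFn x).drop i).take (winLen n)) ∧
    (w11011 <:+: ((List.ofFn x).drop i).take (winLen n)) ∧
    (w110011 <:+: ((List.ofFn x).drop i).take (winLen n))

open Finset Classical in
lemma bad_card_le (n : ℕ) :
    (Finset.univ.filter (fun x : Fin n → Bool => ¬ GoodPred n x)).card
      ≤ (n + 1) * (4 * (63 ^ (winLen n / 6) * 2 ^ (n - 6 * (winLen n / 6)))) := by
  classical
  set m := winLen n with hm
  set B := 63 ^ (m / 6) * 2 ^ (n - 6 * (m / 6)) with hB
  set F : ℕ → List Bool → Finset (Fin n → Bool) := fun i w =>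
    Finset.univ.filter (fun x : Fin n → Bool => ¬ w <:+: (((List.ofFn x).drop i).take m)) with hF
  have hsub : (Finset.univ.filter (fun x : Fin n → Bool => ¬ GoodPred n x)) ⊆
      ((range (n+1)).filter (fun i => i + m ≤ n)).biUnion
        (fun i => F i w0000 ∪ F i w1111 ∪ F i w11011 ∪ F i w110011) := by
    intro x hx
    rw [mem_filter] at hx
    have hx2 := hx.2
    rw [GoodPred] at hx2
    push_neg at hx2
    obtain ⟨i, hi, hnc⟩ := hx2
    refine mem_biUnion.mpr ⟨i, ?_, ?_⟩
    · rw [mem_filter, mem_range]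
      exact ⟨by omega, hi⟩
    · simp only [hF, mem_union, mem_filter, mem_univ, true_and]
      tauto
  refine (Finset.card_le_card hsub).trans ((Finset.card_biUnion_le).trans ?_)
  have hbound : ∀ i ∈ (range (n+1)).filter (fun i => i + m ≤ n),
      (F i w0000 ∪ F i w1111 ∪ F i w11011 ∪ F i w110011).card ≤ 4 * B := by
    intro i hi
    rw [mem_filter] at hi
    have him := hi.2
    have h1 := card_pattern_bad (n := n) (m := m) (i := i) w0000 (by decide) him
    have h2 := card_pattern_bad (n := n) (m := m) (i := i) w1111 (by decide) him
    have h3 := card_pattern_bad (n := n) (m := m) (i := i) w11011 (by decide) him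
    have h4 := card_pattern_bad (n := n) (m := m) (i := i) w110011 (by decide) him
    have hu1 := Finset.card_union_le (F i w0000 ∪ F i w1111 ∪ F i w11011) (F i w110011)
    have hu2 := Finset.card_union_le (F i w0000 ∪ F i w1111) (F i w11011)
    have hu3 := Finset.card_union_le (F i w0000) (F i w1111)
    simp only [hF] at hu1 hu2 hu3 ⊢
    omega
  calc ∑ i ∈ (range (n+1)).filter (fun i => i + m ≤ n),
        (F i w0000 ∪ F i w1111 ∪ F i w11011 ∪ F i w110011).card
      ≤ ∑ _i ∈ (range (n+1)).filter (fun i => i + m ≤ n), 4 * B := Finset.sum_le_sum hbound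
    _ = ((range (n+1)).filter (fun i => i + m ≤ n)).card * (4 * B) := by
        rw [Finset.sum_const, smul_eq_mul]
    _ ≤ (n + 1) * (4 * B) := by
        apply Nat.mul_le_mul_right
        exact (Finset.card_filter_le _ _).trans_eq (Finset.card_range (n+1))

open Classical in
lemma ratio_lower (n : ℕ) :
    1 - 4*((n:ℝ)+1) * ((63:ℝ)/64)^(winLen n / 6)
      ≤ ((Finset.univ.filter (fun x : Fin n → Bool => GoodPred n x)).card : ℝ) / 2^n := by
  classical
  set m := winLen n with hm
  set T := m / 6 with hT
  have h6Tm : 6 * T ≤ m := Nat.mul_div_le m 6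
  have hsum : (Finset.univ.filter (fun x : Fin n → Bool => GoodPred n x)).card
      + (Finset.univ.filter (fun x : Fin n → Bool => ¬ GoodPred n x)).card = 2^n := by
    rw [Finset.card_filter_add_card_filter_not, Finset.card_univ]
    simp
  have h2pos : (0:ℝ) < 2^n := by positivity
  by_cases hmn : m ≤ n
  · have h6T : 6 * T ≤ n := h6Tm.trans hmn
    have hpow : ((63:ℝ)/64)^T = 63^T / 2^(6*T) := by
      rw [div_pow]
      congr 1
      rw [show (64:ℝ) = 2^6 by norm_num, ← pow_mul]
    have hBr : (((n+1)*(4*(63^T*2^(n-6*T))) : ℕ) : ℝ) = 4*((n:ℝ)+1)*((63:ℝ)/64)^T * 2^n := by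
      push_cast
      rw [hpow]
      have h2n : ((2:ℝ))^n = 2^(n-6*T) * 2^(6*T) := by rw [← pow_add]; congr 1; omega
      rw [h2n]
      field_simp
    have hbad : ((Finset.univ.filter (fun x : Fin n → Bool => ¬ GoodPred n x)).card : ℝ)
        ≤ 4*((n:ℝ)+1)*((63:ℝ)/64)^T * 2^n := by
      rw [← hBr]
      exact_mod_cast bad_card_le n
    have hgd : ((Finset.univ.filter (fun x : Fin n → Bool => GoodPred n x)).card : ℝ)
        + ((Finset.univ.filter (fun x : Fin n → Bool => ¬ GoodPred n x)).card : ℝ) = 2^n := by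
      exact_mod_cast hsum
    rw [le_div_iff₀ h2pos]
    nlinarith [hgd, hbad]
  · have hempty : (Finset.univ.filter (fun x : Fin n → Bool => ¬ GoodPred n x)) = ∅ := by
      apply Finset.filter_eq_empty_iff.mpr
      intro x _
      simp only [not_not]
      intro i hi
      exact absurd hi (by omega)
    rw [hempty] at hsum
    simp only [Finset.card_empty, add_zero] at hsum
    rw [hsum]
    push_cast
    rw [div_self (ne_of_gt h2pos)]
    have : (0:ℝ) ≤ 4*((n:ℝ)+1) * ((63:ℝ)/64)^T := by positivity
    linarith

open Classical in
lemma ratio_upper (n : ℕ) :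
    ((Finset.univ.filter (fun x : Fin n → Bool => GoodPred n x)).card : ℝ) / 2^n ≤ 1 := by
  classical
  have h2pos : (0:ℝ) < 2^n := by positivity
  rw [div_le_one h2pos]
  have := Finset.card_filter_le (Finset.univ : Finset (Fin n → Bool))
    (fun x : Fin n → Bool => GoodPred n x)
  have hcu : (Finset.univ : Finset (Fin n → Bool)).card = 2^n := by
    rw [Finset.card_univ]; simp
  exact_mod_cast hcu ▸ this

/-- The proportion of strings of length `n` in which every window of `⌈sₙ/2⌉` consecutive
symbols contains each of `0000`, `1111`, `11011`, `110011` tends to `1`. -/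
theorem constrained_proportion_tendsto_one :
    Filter.Tendsto (fun n : ℕ =>
      (Nat.card {x : Fin n → Bool //
        ∀ i, i + winLen n ≤ n →
          (w0000 <:+: ((List.ofFn x).drop i).take (winLen n)) ∧
          (w1111 <:+: ((List.ofFn x).drop i).take (winLen n)) ∧
          (w11011 <:+: ((List.ofFn x).drop i).take (winLen n)) ∧
          (w110011 <:+: ((List.ofFn x).drop i).take (winLen n))} : ℝ) / 2 ^ n)
      Filter.atTop (nhds 1) := by
  classical
  have hcard : ∀ n : ℕ, (Nat.card {x : Fin n → Bool // GoodPred n x} : ℝ)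
      = ((Finset.univ.filter (fun x : Fin n → Bool => GoodPred n x)).card : ℝ) := by
    intro n
    norm_cast
    rw [Nat.card_eq_fintype_card, Fintype.card_subtype]
  have main : Filter.Tendsto (fun n : ℕ =>
      (Nat.card {x : Fin n → Bool // GoodPred n x} : ℝ) / 2 ^ n) Filter.atTop (nhds 1) := by
    simp only [hcard]
    have hg : Filter.Tendsto
        (fun n : ℕ => 1 - 4*((n:ℝ)+1) * ((63:ℝ)/64)^(winLen n / 6))
        Filter.atTop (nhds 1) := by
      have h := (tendsto_const_nhds (x := (1:ℝ)) (f := (Filter.atTop : Filter ℕ))).sub g_tendsto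
      simpa using h
    exact tendsto_of_tendsto_of_tendsto_of_le_of_le hg tendsto_const_nhds ratio_lower ratio_upper
  exact main
end
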